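/- arXiv:2409.05248 — 6 statements merged into one kernel-verified Lean document; each statement's English description precedes it below -/
import Mathlib

section
/- Let f ∈ F_q[x_0,...,x_n] be a nonzero homogeneous polynomial of degree q+1 whose zero set in P^n contains all F_q-rational points, and suppose the corresponding hypersurface S_f is smooth. If L is a line of P^n defined over F_q that is tangent to S_f at some point, then L is entirely contained in S_f. -/
open MvPolynomial

/-- Evaluation over the algebraic closure of a polynomial with coefficients in `F`. -/
noncomputable def evalK (F : Type*) [Field F] {m : ℕ} (g : MvPolynomial (Fin m) F)
    (v : Fin m → AlgebraicClosure F) : AlgebraicClosure F :=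
  eval v (map (algebraMap F (AlgebraicClosure F)) g)

/-- The point `s·a + t·b` of the algebraic-closure points of the `F_q`-line spanned by `a, b`. -/
noncomputable def linePt (F : Type*) [Field F] {m : ℕ} (a b : Fin m → F)
    (s t : AlgebraicClosure F) : Fin m → AlgebraicClosure F :=
  fun i => s * algebraMap F (AlgebraicClosure F) (a i) +
    t * algebraMap F (AlgebraicClosure F) (b i)

/-- The hypersurface defined by `g` is smooth: the gradient does not vanish at any
nonzero point of the affine cone over the algebraic closure. -/
def SmoothHyp (F : Type*) [Field F] {m : ℕ} (g : MvPolynomial (Fin m) F) : Prop :=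
  ∀ v : Fin m → AlgebraicClosure F, v ≠ 0 → evalK F g v = 0 →
    ∃ i, evalK F (pderiv i g) v ≠ 0

/-- The hypersurface defined by `g` contains every `F_q`-rational point. -/
def SpaceFilling (F : Type*) [Field F] {m : ℕ} (g : MvPolynomial (Fin m) F) : Prop :=
  ∀ v : Fin m → F, eval v g = 0

/-- The `F_q`-line spanned by `a, b` is tangent to the hypersurface of `g`: at some point
of the line lying on the hypersurface, either the point is singular, or the whole line lies
in the tangent hyperplane there. -/
noncomputable def TangentLine (F : Type*) [Field F] {m : ℕ} (g : MvPolynomial (Fin m) F)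
    (a b : Fin m → F) : Prop :=
  ∃ s t : AlgebraicClosure F, (s ≠ 0 ∨ t ≠ 0) ∧ evalK F g (linePt F a b s t) = 0 ∧
    ((∀ i, evalK F (pderiv i g) (linePt F a b s t) = 0) ∨
      ((∑ j, evalK F (pderiv j g) (linePt F a b s t) *
          algebraMap F (AlgebraicClosure F) (a j)) = 0 ∧
       (∑ j, evalK F (pderiv j g) (linePt F a b s t) *
          algebraMap F (AlgebraicClosure F) (b j)) = 0))

/-- The `F_q`-line spanned by `a, b` is entirely contained in the hypersurface of `g`. -/
noncomputable def ContainedLine (F : Type*) [Field F] {m : ℕ} (g : MvPolynomial (Fin m) F)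
    (a b : Fin m → F) : Prop :=
  ∀ s t : AlgebraicClosure F, evalK F g (linePt F a b s t) = 0

namespace TangentAux


open Polynomial

variable {R : Type*} [CommRing R] {m : ℕ}

/-- Substitution `x_j ↦ α_j X + β_j` as a ring hom to `R[X]`. -/
noncomputable def lineHom (α β : Fin m → R) : MvPolynomial (Fin m) R →+* Polynomial R :=
  MvPolynomial.eval₂Hom Polynomial.C (fun j => Polynomial.C (α j) * Polynomial.X + Polynomial.C (β j))

lemma lineHom_eval (α β : Fin m → R) (p : MvPolynomial (Fin m) R) (s : R) :
    (lineHom α β p).eval s = MvPolynomial.eval (fun j => α j * s + β j) p := by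
  have e2 : lineHom α β p = MvPolynomial.eval₂ Polynomial.C
      (fun j => Polynomial.C (α j) * Polynomial.X + Polynomial.C (β j)) p := rfl
  have key := MvPolynomial.eval₂_comp_left (Polynomial.evalRingHom s) Polynomial.C
    (fun j => Polynomial.C (α j) * Polynomial.X + Polynomial.C (β j)) p
  have hid : (Polynomial.evalRingHom s).comp Polynomial.C = RingHom.id R := by
    ext x; simp
  rw [hid, MvPolynomial.eval₂_id] at key
  have e1 : (lineHom α β p).eval s = Polynomial.evalRingHom s (lineHom α β p) := rfl
  rw [e1, e2, key]
  have hg : (⇑(Polynomial.evalRingHom s) ∘ fun j =>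
      Polynomial.C (α j) * Polynomial.X + Polynomial.C (β j)) = fun j => α j * s + β j := by
    funext j; simp
  rw [hg]

lemma derivative_lineHom (α β : Fin m → R) (p : MvPolynomial (Fin m) R) :
    Polynomial.derivative (lineHom α β p) =
      ∑ j, lineHom α β (pderiv j p) * Polynomial.C (α j) := by
  induction p using MvPolynomial.induction_on with
  | C a => simp [lineHom]
  | add p q hp hq =>
      simp only [map_add, derivative_add, hp, hq, add_mul, Finset.sum_add_distrib]
  | mul_X p i hp =>
      have hX : lineHom α β (X i) = Polynomial.C (α i) * Polynomial.X + Polynomial.C (β i) := by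
        simp [lineHom]
      have hstep : ∀ j, lineHom α β (pderiv j (p * X i)) =
          lineHom α β (pderiv j p) * (Polynomial.C (α i) * Polynomial.X + Polynomial.C (β i)) +
            lineHom α β p * (if j = i then 1 else 0) := by
        intro j
        rw [pderiv_mul, map_add, map_mul, map_mul, hX, pderiv_X]
        congr 1
        split <;> rename_i h <;> simp [Pi.single_apply, h]
      have hsum : ∑ j, lineHom α β p * (if j = i then 1 else 0) * Polynomial.C (α j)
          = lineHom α β p * Polynomial.C (α i) := by
        rw [Finset.sum_eq_single i]
        · simp
        · intro j _ hj; simp [hj]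
        · intro h; exact absurd (Finset.mem_univ i) h
      have h2 : Polynomial.derivative
          (Polynomial.C (α i) * Polynomial.X + Polynomial.C (β i)) = Polynomial.C (α i) := by
        simp
      rw [map_mul, hX, derivative_mul, hp, h2]
      simp only [hstep, add_mul, Finset.sum_add_distrib]
      rw [hsum, Finset.sum_mul]
      refine congrArg (· + lineHom α β p * Polynomial.C (α i)) ?_
      exact Finset.sum_congr rfl fun j _ => by ring


lemma coeff_prod_of_le {ι : Type*} (s : Finset ι) (g : ι → R[X]) (n : ι → ℕ)
    (h : ∀ i ∈ s, (g i).natDegree ≤ n i) :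
    (∏ i ∈ s, g i).coeff (∑ i ∈ s, n i) = ∏ i ∈ s, (g i).coeff (n i) := by
  induction s using Finset.cons_induction with
  | empty => simp
  | cons a s ha ih =>
      rw [Finset.prod_cons, Finset.sum_cons,
        Polynomial.coeff_mul_add_eq_of_natDegree_le (h a (Finset.mem_cons_self a s))
          ((Polynomial.natDegree_prod_le _ _).trans
            (Finset.sum_le_sum fun i hi => h i (Finset.mem_cons_of_mem hi))),
        ih fun i hi => h i (Finset.mem_cons_of_mem hi), Finset.prod_cons]

lemma natDegree_line_le (u v : R) : (Polynomial.C u * Polynomial.X + Polynomial.C v).natDegree ≤ 1 := by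
  compute_degree

lemma coeff_line_pow (u v : R) (k : ℕ) :
    ((Polynomial.C u * Polynomial.X + Polynomial.C v) ^ k).coeff k = u ^ k := by
  have h := Polynomial.coeff_pow_of_natDegree_le (p := Polynomial.C u * Polynomial.X + Polynomial.C v)
    (n := 1) (m := k) (natDegree_line_le u v)
  rw [mul_one] at h
  rw [h]
  congr 1
  simp

lemma degree_of_mem_support {p : MvPolynomial (Fin m) R} {d : ℕ} (hp : p.IsHomogeneous d)
    {e : Fin m →₀ ℕ} (he : e ∈ p.support) : ∑ i ∈ e.support, e i = d := by
  have h := hp (MvPolynomial.mem_support_iff.mp he)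
  have h' : Finsupp.degree e = d := by rw [Finsupp.degree_eq_weight_one]; exact h
  exact h'

lemma coeff_lineHom (α β : Fin m → R) {p : MvPolynomial (Fin m) R} {d : ℕ}
    (hp : p.IsHomogeneous d) :
    (lineHom α β p).coeff d = MvPolynomial.eval α p := by
  have e2 : lineHom α β p = MvPolynomial.eval₂ Polynomial.C
      (fun j => Polynomial.C (α j) * Polynomial.X + Polynomial.C (β j)) p := rfl
  rw [e2, MvPolynomial.eval₂_eq, MvPolynomial.eval_eq, Polynomial.finset_sum_coeff]
  refine Finset.sum_congr rfl fun e he => ?_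
  rw [Polynomial.coeff_C_mul, ← degree_of_mem_support hp he,
    coeff_prod_of_le _ _ _ fun i _ => Polynomial.natDegree_pow_le_of_le (e i) (natDegree_line_le _ _) |>.trans (by omega)]
  congr 1
  exact Finset.prod_congr rfl fun i _ => coeff_line_pow _ _ _

lemma natDegree_lineHom_le (α β : Fin m → R) {p : MvPolynomial (Fin m) R} {d : ℕ}
    (hp : p.IsHomogeneous d) : (lineHom α β p).natDegree ≤ d := by
  have e2 : lineHom α β p = MvPolynomial.eval₂ Polynomial.C
      (fun j => Polynomial.C (α j) * Polynomial.X + Polynomial.C (β j)) p := rfl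
  rw [e2, MvPolynomial.eval₂_eq]
  refine Polynomial.natDegree_sum_le_of_forall_le _ _ fun e he => ?_
  refine (Polynomial.natDegree_mul_le).trans ?_
  rw [Polynomial.natDegree_C, zero_add]
  refine (Polynomial.natDegree_prod_le _ _).trans ?_
  rw [← degree_of_mem_support hp he]
  exact Finset.sum_le_sum fun i _ =>
    (Polynomial.natDegree_pow_le_of_le (e i) (natDegree_line_le _ _)).trans (by omega)

lemma eval_mul_homog {p : MvPolynomial (Fin m) R} {d : ℕ} (hp : p.IsHomogeneous d)
    (c : R) (v : Fin m → R) :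
    MvPolynomial.eval (fun j => c * v j) p = c ^ d * MvPolynomial.eval v p := by
  rw [MvPolynomial.eval_eq, MvPolynomial.eval_eq, Finset.mul_sum]
  refine Finset.sum_congr rfl fun e he => ?_
  rw [← degree_of_mem_support hp he]
  simp only [mul_pow, Finset.prod_mul_distrib, Finset.prod_pow_eq_pow_sum]
  ring



lemma two_le_rootMultiplicity {K : Type*} [Field K] {P : Polynomial K} (hP : P ≠ 0) {x : K}
    (h0 : P.eval x = 0) (h1 : P.derivative.eval x = 0) : 2 ≤ P.rootMultiplicity x := by
  rw [Polynomial.le_rootMultiplicity_iff hP]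
  obtain ⟨g, hg⟩ := Polynomial.dvd_iff_isRoot.mpr h0
  have hg0 : g.eval x = 0 := by
    have hd := congrArg Polynomial.derivative hg
    rw [Polynomial.derivative_mul, Polynomial.derivative_sub, Polynomial.derivative_X,
      Polynomial.derivative_C, sub_zero, one_mul] at hd
    have he := congrArg (Polynomial.eval x) hd
    simpa [h1, eq_comm] using he
  obtain ⟨h, hh⟩ := Polynomial.dvd_iff_isRoot.mpr hg0
  refine ⟨h, ?_⟩
  rw [hg, hh]; ring

section Aux

variable {F : Type*} [Field F] [Fintype F] {m : ℕ}

local notation "K" => AlgebraicClosure F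
local notation "ι" => algebraMap F (AlgebraicClosure F)

lemma aux (q : ℕ) (hq : Fintype.card F = q)
    (f : MvPolynomial (Fin m) F) (hhom : f.IsHomogeneous (q + 1))
    (hfill : ∀ v : Fin m → F, MvPolynomial.eval v f = 0)
    (a b : Fin m → F) (s₀ t₀ : AlgebraicClosure F) (ht₀ : t₀ ≠ 0)
    (h0 : evalK F f (linePt F a b s₀ t₀) = 0)
    (hA : (∑ j, evalK F (pderiv j f) (linePt F a b s₀ t₀) * ι (a j)) = 0) :
    ∀ s t : AlgebraicClosure F, evalK F f (linePt F a b s t) = 0 := by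
  classical
  set g : MvPolynomial (Fin m) K := MvPolynomial.map (ι : F →+* K) f with hgdef
  have hg : g.IsHomogeneous (q + 1) := hhom.map _
  set α : Fin m → K := fun j => ι (a j) with hα
  set β : Fin m → K := fun j => t₀ * ι (b j) with hβ
  set P : Polynomial K := lineHom α β g with hPdef
  have hPeval : ∀ s, P.eval s = evalK F f (linePt F a b s t₀) := by
    intro s
    rw [hPdef, lineHom_eval]
    have harg : (fun j => α j * s + β j) = linePt F a b s t₀ := by
      funext j
      show α j * s + β j = s * ι (a j) + t₀ * ι (b j)
      rw [hα, hβ]; ring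
    rw [harg]; rfl
  have hFval : ∀ v : Fin m → F, MvPolynomial.eval (fun j => ι (v j)) g = 0 := by
    intro v
    have h1 : MvPolynomial.eval (fun j => ι (v j)) g
        = MvPolynomial.eval₂ (ι : F →+* K) (fun j => ι (v j)) f := by
      rw [hgdef]; exact MvPolynomial.eval_map _ _ _
    have h2 := MvPolynomial.eval₂_comp_left (ι : F →+* K) (RingHom.id F) v f
    rw [MvPolynomial.eval₂_id, RingHom.comp_id] at h2
    rw [h1, show (fun j => ι (v j)) = (ι : F →+* K) ∘ v from rfl, ← h2, hfill v, map_zero]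
  have hscale : ∀ (c : K) (v : Fin m → K),
      MvPolynomial.eval (fun j => c * v j) g = c ^ (q + 1) * MvPolynomial.eval v g :=
    fun c v => eval_mul_homog hg c v
  have hroot : ∀ c : F, P.eval (t₀ * ι c) = 0 := by
    intro c
    have hline : linePt F a b (t₀ * ι c) t₀ = fun j => t₀ * ι (c * a j + b j) := by
      funext j; simp only [linePt, map_add, map_mul]; ring
    rw [hPeval, evalK, hline, ← hgdef]
    rw [show (fun j => t₀ * ι (c * a j + b j))
        = (fun j => t₀ * (fun j' => ι (c * a j' + b j')) j) from rfl]
    rw [hscale t₀ (fun j' => ι (c * a j' + b j')), hFval, mul_zero]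
  have hs0 : P.eval s₀ = 0 := by rw [hPeval]; exact h0
  have hs0' : P.derivative.eval s₀ = 0 := by
    rw [hPdef, derivative_lineHom, Polynomial.eval_finset_sum, ← hA]
    refine Finset.sum_congr rfl fun j _ => ?_
    rw [Polynomial.eval_mul, Polynomial.eval_C, lineHom_eval]
    congr 1
    rw [show pderiv j g = MvPolynomial.map (ι : F →+* K) (pderiv j f) by
      rw [hgdef]; exact MvPolynomial.pderiv_map]
    have harg : (fun j' => α j' * s₀ + β j') = linePt F a b s₀ t₀ := by
      funext j'
      show α j' * s₀ + β j' = s₀ * ι (a j') + t₀ * ι (b j')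
      rw [hα, hβ]; ring
    rw [harg]; rfl
  by_cases hP : P = 0
  · intro s t
    have hline0 : ∀ s', evalK F f (linePt F a b s' t₀) = 0 := fun s' => by
      rw [← hPeval, hP, Polynomial.eval_zero]
    by_cases ht : t = 0
    · subst ht
      have hl : linePt F a b s 0 = fun j => s * (fun j' => ι (a j')) j := by
        funext j; simp [linePt]
      rw [evalK, hl, ← hgdef, hscale s (fun j' => ι (a j')), hFval, mul_zero]
    · have hl : linePt F a b s t = fun j => (t * t₀⁻¹) *
          ((fun j' => (s * t₀ * t⁻¹) * ι (a j') + t₀ * ι (b j')) j) := by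
        funext j
        show s * ι (a j) + t * ι (b j) = _
        field_simp
      have einner : MvPolynomial.eval (fun j' => (s * t₀ * t⁻¹) * ι (a j') + t₀ * ι (b j')) g
          = 0 := by
        have h := hline0 (s * t₀ * t⁻¹)
        rw [evalK, ← hgdef] at h
        have harg : (fun j' => s * t₀ * t⁻¹ * ι (a j') + t₀ * ι (b j'))
            = linePt F a b (s * t₀ * t⁻¹) t₀ := rfl
        rw [harg]; exact h
      rw [evalK, hl, ← hgdef, hscale (t * t₀⁻¹) _, einner, mul_zero]
  · exfalso
    have hdeg : P.natDegree ≤ q := by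
      rw [Polynomial.natDegree_le_iff_coeff_eq_zero]
      intro N hN
      by_cases hN1 : N = q + 1
      · subst hN1
        rw [hPdef, coeff_lineHom α β hg]
        rw [hα, show (fun j => ι (a j)) = (fun j => ι ((fun j' => a j') j)) from rfl]
        exact hFval a
      · exact Polynomial.coeff_eq_zero_of_natDegree_lt
          (lt_of_le_of_lt (natDegree_lineHom_le α β hg) (by omega))
    have hq1 : 1 ≤ q := hq ▸ Fintype.card_pos
    have hι : Function.Injective (ι : F →+* K) := (algebraMap F K).injective
    set S : Finset K := Finset.image (fun c : F => t₀ * ι c) Finset.univ with hS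
    have hScard : S.card = q := by
      rw [hS, Finset.card_image_of_injective _
        (fun x y hxy => hι (mul_left_cancel₀ ht₀ hxy)), Finset.card_univ, hq]
    have hmult2 : 2 ≤ P.rootMultiplicity s₀ := two_le_rootMultiplicity hP hs0 hs0'
    have hmult1 : ∀ x ∈ S, 1 ≤ P.rootMultiplicity x := by
      intro x hx
      obtain ⟨c, -, rfl⟩ := Finset.mem_image.mp hx
      exact (Polynomial.rootMultiplicity_pos hP).mpr (hroot c)
    set M : Multiset K := (S.erase s₀).val + Multiset.replicate 2 s₀ with hM
    have hMle : M ≤ P.roots := by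
      rw [Multiset.le_iff_count]
      intro y
      rw [Polynomial.count_roots, hM, Multiset.count_add, Multiset.count_replicate]
      by_cases hy : y = s₀
      · have hnm : y ∉ (S.erase s₀).val := by
          rw [hy, Finset.mem_val]
          exact Finset.notMem_erase s₀ S
        rw [if_pos hy.symm, Multiset.count_eq_zero_of_notMem hnm, zero_add, hy]
        exact hmult2
      · rw [if_neg (fun h => hy h.symm), add_zero]
        by_cases hyS : y ∈ S.erase s₀
        · rw [Multiset.count_eq_one_of_mem (S.erase s₀).nodup (Finset.mem_val.mpr hyS)]
          exact hmult1 y (Finset.mem_of_mem_erase hyS)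
        · rw [Multiset.count_eq_zero_of_notMem (fun hc => hyS (Finset.mem_val.mp hc))]
          exact Nat.zero_le _
    have hcard : Multiset.card M ≤ P.natDegree :=
      le_trans (Multiset.card_le_card hMle) (Polynomial.card_roots' P)
    have hcard2 : q + 1 ≤ Multiset.card M := by
      have herase : S.card - 1 ≤ (S.erase s₀).card := Finset.pred_card_le_card_erase
      rw [hM, Multiset.card_add, Multiset.card_replicate]
      have : Multiset.card (S.erase s₀).val = (S.erase s₀).card := rfl
      omega
    omega

end Aux

end TangentAux
/-- If a smooth space-filling hypersurface of degree `q+1` in `ℙⁿ` over `F_q`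
is tangent to an `F_q`-line at some point, then the line is contained in the hypersurface. -/
theorem tangentLineContained (q n : ℕ) (F : Type*) [Field F] [Fintype F]
    (hq : Fintype.card F = q)
    (f : MvPolynomial (Fin (n + 1)) F) (hf0 : f ≠ 0) (hhom : f.IsHomogeneous (q + 1))
    (hfill : SpaceFilling F f) (hsm : SmoothHyp F f)
    (a b : Fin (n + 1) → F) (hab : LinearIndependent F ![a, b])
    (htan : TangentLine F f a b) :
    ContainedLine F f a b := by
  classical
  unfold TangentLine at htan
  obtain ⟨s₀, t₀, hst, h0, htang⟩ := htan
  set ι := algebraMap F (AlgebraicClosure F) with hιdef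
  have hι : Function.Injective ι := (algebraMap F (AlgebraicClosure F)).injective
  -- concrete linear independence over F
  have hliF : ∀ s t : F, (∀ j, s * a j + t * b j = 0) → s = 0 ∧ t = 0 := by
    intro s t h
    have hlin := Fintype.linearIndependent_iff.mp hab ![s, t] ?_
    · exact ⟨hlin 0, hlin 1⟩
    · rw [Fin.sum_univ_two]
      funext j
      simpa using h j
  have hbne : b ≠ 0 := fun hb => one_ne_zero ((hliF 0 1 (fun j => by simp [hb])).2)
  have hane : a ≠ 0 := fun ha => one_ne_zero ((hliF 1 0 (fun j => by simp [ha])).1)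
  -- nonvanishing of points of the line over the algebraic closure
  have hvne : linePt F a b s₀ t₀ ≠ 0 := by
    intro hzero
    have hz : ∀ j, s₀ * ι (a j) + t₀ * ι (b j) = 0 := fun j => congrFun hzero j
    by_cases hs : s₀ = 0
    · have ht : t₀ ≠ 0 := by
        rcases hst with h | h
        · exact absurd hs h
        · exact h
      refine hbne (funext fun j => ?_)
      have := hz j
      rw [hs, zero_mul, zero_add] at this
      have hb0 : ι (b j) = 0 := (mul_eq_zero.mp this).resolve_left ht
      exact hι (by simpa using hb0)
    · by_cases hb : b = 0
      · refine hane (funext fun j => ?_)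
        have := hz j
        rw [hb] at this
        simp only [Pi.zero_apply, map_zero, mul_zero, add_zero] at this
        have ha0 : ι (a j) = 0 := (mul_eq_zero.mp this).resolve_left hs
        exact hι (by simpa using ha0)
      · obtain ⟨i, hbi⟩ : ∃ i, b i ≠ 0 := by
          by_contra hall
          push_neg at hall
          exact hb (funext hall)
        have hcross : ∀ j, a j * b i = a i * b j := by
          intro j
          apply hι
          rw [map_mul, map_mul]
          have key : s₀ * (ι (a j) * ι (b i)) = s₀ * (ι (a i) * ι (b j)) := by
            linear_combination (ι (b i)) * hz j - (ι (b j)) * hz i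
          exact mul_left_cancel₀ hs key
        set c := a i * (b i)⁻¹ with hc
        have hab2 : ∀ j, 1 * a j + (-c) * b j = 0 := by
          intro j
          have h3 : a j = c * b j := by
            rw [hc]
            field_simp
            linear_combination hcross j
          rw [h3]; ring
        exact one_ne_zero (hliF 1 (-c) hab2).1
  rcases htang with hsing | ⟨hA, hB⟩
  · obtain ⟨i, hi⟩ := hsm _ hvne h0
    exact absurd (hsing i) hi
  show ∀ s t : AlgebraicClosure F, evalK F f (linePt F a b s t) = 0
  by_cases ht₀ : t₀ = 0
  · have hs₀ : s₀ ≠ 0 := by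
      rcases hst with h | h
      · exact h
      · exact absurd ht₀ h
    have hswap : ∀ s t : AlgebraicClosure F, linePt F a b s t = linePt F b a t s := by
      intro s t
      funext j
      show s * ι (a j) + t * ι (b j) = t * ι (b j) + s * ι (a j)
      ring
    have h0' : evalK F f (linePt F b a t₀ s₀) = 0 := by rw [← hswap]; exact h0
    have hB' : (∑ j, evalK F (pderiv j f) (linePt F b a t₀ s₀) * ι (b j)) = 0 := by
      simp only [← hswap]
      exact hB
    have hmain := TangentAux.aux q hq f hhom hfill b a t₀ s₀ hs₀ h0' hB'
    intro s t
    rw [hswap]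
    exact hmain t s
  · exact TangentAux.aux q hq f hhom hfill a b s₀ t₀ ht₀ h0 hA
end

section
/- No smooth space-filling hypersurface of degree q+1 in P^n over F_q is line-transverse-free; that is, for every such hypersurface there exists an F_q-line transverse to it. -/
open MvPolynomial

section Aux

open Polynomial

variable {F : Type*} [Field F] {m : ℕ}

noncomputable def lsub (a b : Fin m → F) : MvPolynomial (Fin m) F →+* Polynomial F :=
  eval₂Hom Polynomial.C (fun j => Polynomial.C (a j) * Polynomial.X + Polynomial.C (b j))

theorem lsub_eval {K : Type*} [CommRing K] (σ : F →+* K) (a b : Fin m → F) (u : K)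
    (g : MvPolynomial (Fin m) F) :
    Polynomial.eval u (Polynomial.map σ (lsub a b g)) =
      eval₂ σ (fun j => u * σ (a j) + σ (b j)) g := by
  have h : ((Polynomial.evalRingHom u).comp ((Polynomial.mapRingHom σ).comp (lsub a b))) =
      eval₂Hom σ (fun j => u * σ (a j) + σ (b j)) := by
    apply MvPolynomial.ringHom_ext
    · intro r; simp [lsub]
    · intro j; simp [lsub]; ring
  exact DFunLike.congr_fun h g

theorem lsub_X (a b : Fin m → F) (i : Fin m) :
    lsub a b (X i) = Polynomial.C (a i) * Polynomial.X + Polynomial.C (b i) := by simp [lsub]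

theorem lsub_derivative (a b : Fin m → F) (g : MvPolynomial (Fin m) F) :
    Polynomial.derivative (lsub a b g) = ∑ j, Polynomial.C (a j) * lsub a b (pderiv j g) := by
  induction g using MvPolynomial.induction_on with
  | C r => simp [lsub]
  | add p q hp hq =>
    simp only [map_add, Polynomial.derivative_add, hp, hq, mul_add, Finset.sum_add_distrib]
  | mul_X p i hp =>
    have h2 : ∀ j, pderiv j (p * X i) = pderiv j p * X i + p * (if i = j then 1 else 0) := by
      intro j
      rw [pderiv_mul, pderiv_X]
      congr 1
      by_cases h : i = j <;> simp [h, Pi.single_apply, eq_comm]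
    have h4 : ∑ j, Polynomial.C (a j) * (lsub a b p * lsub a b (if i = j then (1:MvPolynomial (Fin m) F) else 0)) = Polynomial.C (a i) * lsub a b p := by
      rw [Finset.sum_eq_single i]
      · simp
      · intro j _ hji; simp [Ne.symm hji]
      · simp
    calc Polynomial.derivative (lsub a b (p * X i))
        = Polynomial.derivative (lsub a b p * (Polynomial.C (a i) * Polynomial.X + Polynomial.C (b i))) := by
          rw [map_mul, lsub_X]
      _ = Polynomial.derivative (lsub a b p) * (Polynomial.C (a i) * Polynomial.X + Polynomial.C (b i))
            + lsub a b p * Polynomial.C (a i) := by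
          rw [Polynomial.derivative_mul]
          congr 1
          simp
      _ = ∑ j, Polynomial.C (a j) * lsub a b (pderiv j (p * X i)) := by
          rw [hp, Finset.sum_mul]
          have h6 : ∀ j : Fin m, Polynomial.C (a j) * lsub a b (pderiv j (p * X i)) =
              (Polynomial.C (a j) * lsub a b (pderiv j p)) *
                (Polynomial.C (a i) * Polynomial.X + Polynomial.C (b i))
                + Polynomial.C (a j) * (lsub a b p * lsub a b (if i = j then 1 else 0)) := by
            intro j; rw [h2 j, map_add, map_mul, map_mul, lsub_X]; ring
          rw [Finset.sum_congr rfl fun j _ => h6 j, Finset.sum_add_distrib, h4]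
          ring

theorem coeff_prod_of_natDegree_le' {R : Type*} [CommSemiring R] {ι : Type*} (s : Finset ι)
    (p : ι → R[X]) (d : ι → ℕ) (h : ∀ i ∈ s, (p i).natDegree ≤ d i) :
    (∏ i ∈ s, p i).coeff (∑ i ∈ s, d i) = ∏ i ∈ s, (p i).coeff (d i) := by
  induction s using Finset.cons_induction with
  | empty => simp
  | cons a s ha ih =>
    rw [Finset.prod_cons, Finset.sum_cons, Finset.prod_cons,
      Polynomial.coeff_mul_add_eq_of_natDegree_le (h a (Finset.mem_cons_self a s))
        ((Polynomial.natDegree_prod_le _ _).trans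
          (Finset.sum_le_sum fun i hi => h i (Finset.mem_cons_of_mem hi))),
      ih fun i hi => h i (Finset.mem_cons_of_mem hi)]

theorem natDegree_linpow_le (a b : F) (e : ℕ) :
    ((Polynomial.C a * Polynomial.X + Polynomial.C b) ^ e).natDegree ≤ e := by
  apply (Polynomial.natDegree_pow_le).trans
  have : (Polynomial.C a * Polynomial.X + Polynomial.C b).natDegree ≤ 1 := by
    apply (Polynomial.natDegree_add_le _ _).trans
    simp [Polynomial.natDegree_C_mul_le, Polynomial.natDegree_X_le]
    exact (Polynomial.natDegree_C_mul_le a Polynomial.X).trans Polynomial.natDegree_X_le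
  calc e * (Polynomial.C a * Polynomial.X + Polynomial.C b).natDegree ≤ e * 1 :=
        Nat.mul_le_mul_left e this
    _ = e := mul_one e

theorem coeff_linpow_top (a b : F) (e : ℕ) :
    ((Polynomial.C a * Polynomial.X + Polynomial.C b) ^ e).coeff e = a ^ e := by
  have h1 : (Polynomial.C a * Polynomial.X + Polynomial.C b).natDegree ≤ 1 :=
    (Polynomial.natDegree_add_le _ _).trans (by
      simp only [Polynomial.natDegree_C, max_le_iff, Nat.le_zero, and_true, Nat.zero_le, le_refl]
      exact (Polynomial.natDegree_C_mul_le a Polynomial.X).trans Polynomial.natDegree_X_le)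
  have := Polynomial.coeff_pow_of_natDegree_le (m := e) h1
  rw [mul_one] at this
  rw [this]
  congr 1
  simp

theorem lsub_eq_sum (a b : Fin m → F) (g : MvPolynomial (Fin m) F) :
    lsub a b g = ∑ e ∈ g.support, Polynomial.C (coeff e g) *
      ∏ i ∈ e.support, (Polynomial.C (a i) * Polynomial.X + Polynomial.C (b i)) ^ e i := by
  rw [lsub, coe_eval₂Hom, eval₂_eq]

theorem support_degree {R : Type*} [CommSemiring R] {D : ℕ} {g : MvPolynomial (Fin m) R}
    (hg : g.IsHomogeneous D)
    {e : Fin m →₀ ℕ} (he : e ∈ g.support) : ∑ i ∈ e.support, e i = D := by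
  have := hg (mem_support_iff.mp he)
  rw [← this, Finsupp.weight_apply, Finsupp.sum]
  simp

theorem lsub_natDegree_le {D : ℕ} (a b : Fin m → F) {g : MvPolynomial (Fin m) F}
    (hg : g.IsHomogeneous D) : (lsub a b g).natDegree ≤ D := by
  rw [lsub_eq_sum]
  apply Polynomial.natDegree_sum_le_of_forall_le
  intro e he
  apply (Polynomial.natDegree_mul_le).trans
  rw [Polynomial.natDegree_C, zero_add]
  apply (Polynomial.natDegree_prod_le _ _).trans
  rw [← support_degree hg he]
  exact Finset.sum_le_sum fun i _ => natDegree_linpow_le _ _ _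

theorem lsub_coeff_top {D : ℕ} (a b : Fin m → F) {g : MvPolynomial (Fin m) F}
    (hg : g.IsHomogeneous D) : (lsub a b g).coeff D = eval a g := by
  rw [lsub_eq_sum, Polynomial.finset_sum_coeff, eval_eq]
  apply Finset.sum_congr rfl
  intro e he
  rw [Polynomial.coeff_C_mul, ← support_degree hg he,
    coeff_prod_of_natDegree_le' _ _ _ (fun i _ => natDegree_linpow_le _ _ _)]
  congr 1
  exact Finset.prod_congr rfl fun i _ => coeff_linpow_top _ _ _

theorem key_identity [Fintype F] {q : ℕ} (hq : Fintype.card F = q) (a b : Fin m → F)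
    {f : MvPolynomial (Fin m) F} (hhom : f.IsHomogeneous (q + 1))
    (hfill : ∀ v : Fin m → F, eval v f = 0) :
    lsub a b f = Polynomial.C ((lsub a b f).coeff q) * (Polynomial.X ^ q - Polynomial.X) := by
  have hq2 : 2 ≤ q := hq ▸ Fintype.one_lt_card
  set p := lsub a b f with hp
  have htop : p.coeff (q + 1) = 0 := by rw [hp, lsub_coeff_top a b hhom]; exact hfill a
  have hdeg : p.natDegree ≤ q := by
    rw [Polynomial.natDegree_le_iff_coeff_eq_zero]
    intro N hN
    rcases eq_or_lt_of_le (Nat.succ_le_of_lt hN) with h | h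
    · rw [← h]; exact htop
    · exact Polynomial.coeff_eq_zero_of_natDegree_lt
        (lt_of_le_of_lt (lsub_natDegree_le a b hhom) h)
  set c := p.coeff q with hc
  have hXq : (Polynomial.X ^ q - Polynomial.X : Polynomial F).coeff q = 1 := by
    rw [Polynomial.coeff_sub, Polynomial.coeff_X_pow, Polynomial.coeff_X]
    simp [Nat.ne_of_lt (lt_of_lt_of_le one_lt_two hq2)]
  have hr : p - Polynomial.C c * (Polynomial.X ^ q - Polynomial.X) = 0 := by
    apply Polynomial.eq_zero_of_natDegree_lt_card_of_eval_eq_zero _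
      (Function.injective_id (α := F))
    · intro α
      have h1 : p.eval α = 0 := by
        have := lsub_eval (RingHom.id F) a b α f
        rw [Polynomial.map_id] at this
        rw [this, MvPolynomial.eval₂_id]
        exact hfill _
      have h2 : (α : F) ^ q = α := hq ▸ FiniteField.pow_card α
      simp [h1, h2]
    · have : (p - Polynomial.C c * (Polynomial.X ^ q - Polynomial.X)).natDegree ≤ q - 1 := by
        rw [Polynomial.natDegree_le_iff_coeff_eq_zero]
        intro N hN
        have hNq : q ≤ N := by omega
        rcases eq_or_lt_of_le hNq with h | h
        · rw [Polynomial.coeff_sub, Polynomial.coeff_C_mul, ← h, hXq, mul_one, ← hc, sub_self]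
          
        · have h1 : p.coeff N = 0 :=
            Polynomial.coeff_eq_zero_of_natDegree_lt (lt_of_le_of_lt hdeg h)
          rw [Polynomial.coeff_sub, Polynomial.coeff_C_mul, Polynomial.coeff_sub,
            Polynomial.coeff_X_pow, Polynomial.coeff_X, h1,
            if_neg (by omega : ¬ N = q), if_neg (by omega : ¬ (1:ℕ) = N)]
          ring
      refine lt_of_le_of_lt this ?_
      rw [hq]; omega
  exact sub_eq_zero.mp hr

theorem eval_smul_homog {K : Type*} [CommRing K] {D : ℕ} {g : MvPolynomial (Fin m) K}
    (hg : g.IsHomogeneous D) (u : K) (w : Fin m → K) :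
    eval (fun i => u * w i) g = u ^ D * eval w g := by
  rw [eval_eq, eval_eq, Finset.mul_sum]
  apply Finset.sum_congr rfl
  intro e he
  simp only [mul_pow]
  rw [Finset.prod_mul_distrib, Finset.prod_pow_eq_pow_sum, support_degree hg he]
  ring

theorem pderiv_isHomogeneous {R : Type*} [CommSemiring R] {D : ℕ} {g : MvPolynomial (Fin m) R}
    (hg : g.IsHomogeneous (D + 1)) (j : Fin m) : (pderiv j g).IsHomogeneous D := by
  have : pderiv j g = ∑ e ∈ g.support, MvPolynomial.monomial (e - Finsupp.single j 1) (coeff e g * (e j : R)) := by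
    conv_lhs => rw [g.as_sum]
    rw [map_sum]
    exact Finset.sum_congr rfl fun e _ => pderiv_monomial
  rw [this]
  apply MvPolynomial.IsHomogeneous.sum
  intro e he
  rcases Nat.eq_zero_or_pos (e j) with h | h
  · rw [h, Nat.cast_zero, mul_zero, map_zero]
    exact isHomogeneous_zero _ _ _
  · apply isHomogeneous_monomial
    have hsplit : (e - Finsupp.single j 1) + Finsupp.single j 1 = e := by
      ext k
      rcases eq_or_ne k j with rfl | hk
      · simp [Finsupp.single_apply]
        omega
      · simp [Finsupp.single_apply, hk.symm, Ne.symm hk]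
    have hdadd : ∀ x y : Fin m →₀ ℕ, Finsupp.degree (x + y) = Finsupp.degree x + Finsupp.degree y := by
      intro x y
      simp only [Finsupp.degree_eq_weight_one, map_add]
    have hds : Finsupp.degree (Finsupp.single j 1) = 1 := by
      rw [Finsupp.degree_eq_weight_one, Finsupp.weight_apply, Finsupp.sum_single_index] <;> simp
    have hde : Finsupp.degree e = D + 1 := by
      rw [Finsupp.degree]
      exact support_degree hg he
    have := congrArg Finsupp.degree hsplit
    rw [hdadd, hds, hde] at this
    omega

theorem evalK_cast (g : MvPolynomial (Fin m) F) (v : Fin m → F) :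
    evalK F g (fun i => algebraMap F (AlgebraicClosure F) (v i)) =
      algebraMap F (AlgebraicClosure F) (eval v g) := by
  rw [evalK, MvPolynomial.eval_map]
  have := eval₂_comp_left (algebraMap F (AlgebraicClosure F)) (RingHom.id F) v g
  rw [RingHom.comp_id, MvPolynomial.eval₂_id] at this
  exact this.symm

theorem evalK_linePt' (a b : Fin m → F) (u : AlgebraicClosure F) (g : MvPolynomial (Fin m) F) :
    evalK F g (fun i => u * algebraMap F (AlgebraicClosure F) (a i) +
        1 * algebraMap F (AlgebraicClosure F) (b i)) =
      Polynomial.eval u (Polynomial.map (algebraMap F (AlgebraicClosure F)) (lsub a b g)) := by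
  rw [lsub_eval (algebraMap F (AlgebraicClosure F)) a b u g, evalK, MvPolynomial.eval_map]
  congr 1
  funext i
  rw [one_mul]

theorem evalK_smul' {D : ℕ} {g : MvPolynomial (Fin m) F} (hg : g.IsHomogeneous D)
    (u : AlgebraicClosure F) (w : Fin m → AlgebraicClosure F) :
    evalK F g (u • w) = u ^ D * evalK F g w := by
  rw [evalK, evalK]
  have : (u • w) = fun i => u * w i := rfl
  rw [this]
  exact eval_smul_homog (hg.map _) u w

end Aux

/-- No smooth space-filling hypersurface of degree `q+1` in `ℙⁿ` over `F_q`
is line-transverse-free: there is always an `F_q`-line not tangent to it. -/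
theorem notLineTransverseFree_deg_q_add_one (q n : ℕ) (F : Type*) [Field F] [Fintype F]
    (hq : Fintype.card F = q)
    (f : MvPolynomial (Fin (n + 1)) F) (hf0 : f ≠ 0) (hhom : f.IsHomogeneous (q + 1))
    (hfill : SpaceFilling F f) (hsm : SmoothHyp F f) :
    ∃ a b : Fin (n + 1) → F, LinearIndependent F ![a, b] ∧ ¬ TangentLine F f a b := by
  classical

  have hq2 : 2 ≤ q := hq ▸ Fintype.one_lt_card
  set σK := algebraMap F (AlgebraicClosure F) with hσK
  have hσinj : Function.Injective σK := σK.injective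
  have hcast : ((q : F)) = 0 := by rw [← hq]; exact Nat.cast_card_eq_zero F
  have hfill' : ∀ v : Fin (n + 1) → F, eval v f = 0 := hfill
  -- the derivative of the substituted polynomial is the negated top coefficient
  have keyD : ∀ x y : Fin (n + 1) → F,
      Polynomial.derivative (lsub x y f) = -Polynomial.C ((lsub x y f).coeff q) := by
    intro x y
    conv_lhs => rw [key_identity hq x y hhom hfill']
    rw [Polynomial.derivative_C_mul, Polynomial.derivative_sub, Polynomial.derivative_X_pow,
      Polynomial.derivative_X, hcast, Polynomial.C_0, zero_mul, zero_sub, mul_neg_one]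
  -- evalK of linePt in terms of lsub
  have hEL : ∀ (x y : Fin (n + 1) → F) (u : AlgebraicClosure F) (g : MvPolynomial (Fin (n+1)) F),
      evalK F g (linePt F x y u 1) = Polynomial.eval u (Polynomial.map σK (lsub x y g)) := by
    intro x y u g
    exact evalK_linePt' x y u g
  -- key chain-rule identity
  have keyS : ∀ (x y : Fin (n + 1) → F) (u : AlgebraicClosure F),
      ∑ j, σK (x j) * evalK F (pderiv j f) (linePt F x y u 1) =
        -σK ((lsub x y f).coeff q) := by
    intro x y u
    set Φ := (Polynomial.evalRingHom u).comp (Polynomial.mapRingHom σK) with hΦ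
    have h1 := congrArg Φ (lsub_derivative x y f)
    rw [keyD x y, map_neg, map_sum] at h1
    have hΦC : ∀ r : F, Φ (Polynomial.C r) = σK r := by
      intro r; simp [hΦ]
    have hΦl : ∀ (g : MvPolynomial (Fin (n+1)) F), Φ (lsub x y g) =
        evalK F g (linePt F x y u 1) := by
      intro g
      rw [hEL x y u g]
      simp [hΦ]
    have h2 : ∀ j : Fin (n + 1), Φ (Polynomial.C (x j) * lsub x y (pderiv j f)) =
        σK (x j) * evalK F (pderiv j f) (linePt F x y u 1) := by
      intro j; rw [map_mul, hΦC, hΦl]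
    rw [Finset.sum_congr rfl fun j _ => h2 j] at h1
    rw [hΦC] at h1
    exact h1.symm
  -- the rational point b1 and a nonvanishing partial there
  set b1 : Fin (n + 1) → F := fun _ => 1 with hb1
  have hb1K : (fun i => σK (b1 i)) ≠ 0 := by
    intro h
    have := congrFun h 0
    simp [hb1] at this
  have hfK : evalK F f (fun i => σK (b1 i)) = 0 := by
    rw [evalK_cast, hfill b1, map_zero]
  obtain ⟨i, hi⟩ := hsm _ hb1K hfK
  -- an element with u0 ^ q - u0 = 1
  obtain ⟨u0, hu0⟩ : ∃ z : AlgebraicClosure F, z ^ q - z = 1 := by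
    obtain ⟨z, hz⟩ := IsAlgClosed.exists_root (k := AlgebraicClosure F)
      (Polynomial.X ^ q - Polynomial.X - Polynomial.C 1) (by
        have hd1 : (Polynomial.X ^ q - Polynomial.X : Polynomial (AlgebraicClosure F)).degree
            = q := by
          rw [Polynomial.degree_sub_eq_left_of_degree_lt]
          · exact Polynomial.degree_X_pow q
          · rw [Polynomial.degree_X_pow, Polynomial.degree_X]
            exact_mod_cast (by omega : 1 < q)
        have hd2 : (Polynomial.X ^ q - Polynomial.X - Polynomial.C 1 :
            Polynomial (AlgebraicClosure F)).degree = q := by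
          rw [Polynomial.degree_sub_eq_left_of_degree_lt]
          · exact hd1
          · rw [hd1]
            apply lt_of_le_of_lt (Polynomial.degree_C_le)
            exact_mod_cast (by omega : 0 < q)
        rw [hd2]
        exact_mod_cast (by omega : q ≠ 0))
    refine ⟨z, ?_⟩
    have := hz
    simp only [Polynomial.IsRoot, Polynomial.eval_sub, Polynomial.eval_pow, Polynomial.eval_X,
      Polynomial.eval_C] at this
    exact sub_eq_zero.mp this
  have hu0ne : u0 ≠ 0 := by
    intro h
    rw [h, zero_pow (by omega : q ≠ 0), sub_zero] at hu0
    exact zero_ne_one hu0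
  -- linePt at (0, 1) is the cast of the second vector
  have hline0 : ∀ x y : Fin (n + 1) → F, linePt F x y 0 1 = fun i => σK (y i) := by
    intro x y
    funext i'
    simp [linePt, hσK]
  -- value of f along a line in terms of the top coefficient
  have hval : ∀ (x y : Fin (n + 1) → F) (u : AlgebraicClosure F),
      evalK F f (linePt F x y u 1) = σK ((lsub x y f).coeff q) * (u ^ q - u) := by
    intro x y u
    rw [hEL x y u f]
    conv_lhs => rw [key_identity hq x y hhom hfill']
    simp
  cases n with
  | zero =>
    exfalso
    have hc11 : σK ((lsub b1 b1 f).coeff q) = 0 := by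
      have h1 := hval b1 b1 u0
      rw [hu0, mul_one] at h1
      have h2 : linePt F b1 b1 u0 1 = (u0 + 1) • (fun i' => σK (b1 i')) := by
        funext i'
        simp only [linePt, hb1, Pi.smul_apply, smul_eq_mul, map_one]
        ring
      rw [h2, evalK_smul' hhom, hfK, mul_zero] at h1
      exact h1.symm
    have hS := keyS b1 b1 0
    rw [hline0 b1 b1, hc11, neg_zero, Fin.sum_univ_one] at hS
    have hb10 : σK (b1 0) = 1 := by rw [hb1]; exact map_one σK
    rw [hb10, one_mul] at hS
    have hi0 : i = 0 := Subsingleton.elim (α := Fin 1) i 0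
    rw [hi0] at hi
    exact hi hS
  | succ k =>
    set a : Fin (k + 1 + 1) → F := fun j => if j = i then 1 else 0 with ha
    have hσa : ∀ j, σK (a j) = if j = i then 1 else 0 := by
      intro j
      by_cases h : j = i <;> simp [ha, h]
    have hcab : σK ((lsub a b1 f).coeff q) =
        -evalK F (pderiv i f) (fun i' => σK (b1 i')) := by
      have hS := keyS a b1 0
      rw [hline0 a b1] at hS
      rw [Finset.sum_eq_single i] at hS
      · rw [hσa, if_pos rfl, one_mul] at hS
        rw [hS, neg_neg]
      · intro j _ hji
        rw [hσa, if_neg hji, zero_mul]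
      · intro h; exact absurd (Finset.mem_univ i) h
    have hcabne : (lsub a b1 f).coeff q ≠ 0 := by
      intro h
      rw [h, map_zero] at hcab
      have := hcab.symm
      rw [neg_eq_zero] at this
      exact hi this
    have hcba : σK ((lsub b1 a f).coeff q) = -σK ((lsub a b1 f).coeff q) := by
      have h1 := hval b1 a u0
      rw [hu0, mul_one] at h1
      have h2 : linePt F b1 a u0 1 = u0 • linePt F a b1 u0⁻¹ 1 := by
        funext i'
        simp only [linePt, Pi.smul_apply, smul_eq_mul]
        rw [mul_add, ← mul_assoc, mul_inv_cancel₀ hu0ne]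
        ring
      rw [h2, evalK_smul' hhom, hval a b1 u0⁻¹] at h1
      rw [← h1]
      have hq1 : u0 ^ (q + 1) * (σK ((lsub a b1 f).coeff q) * ((u0⁻¹) ^ q - u0⁻¹)) =
          σK ((lsub a b1 f).coeff q) * (u0 - u0 ^ q) := by
        have hinv : u0 ^ q * u0⁻¹ ^ q = 1 := by
          rw [inv_pow]; exact mul_inv_cancel₀ (pow_ne_zero _ hu0ne)
        have hinv1 : u0 * u0⁻¹ = 1 := mul_inv_cancel₀ hu0ne
        linear_combination (σK ((lsub a b1 f).coeff q) * u0) * hinv -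
          (σK ((lsub a b1 f).coeff q) * u0 ^ q) * hinv1
      rw [hq1]
      have hneg : u0 - u0 ^ q = -1 := by rw [← hu0]; ring
      rw [hneg, mul_neg_one]
    refine ⟨a, b1, ?_, ?_⟩
    · rw [linearIndependent_fin2]
      constructor
      · simp only [Matrix.cons_val_one, Matrix.head_cons]
        intro h
        have h0 := congrFun h 0
        rw [hb1] at h0
        exact one_ne_zero h0
      · intro c h
        simp only [Matrix.cons_val_one, Matrix.head_cons, Matrix.cons_val_zero] at h
        obtain ⟨j, hj⟩ := exists_ne i
        have h1 := congrFun h i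
        have h2 := congrFun h j
        simp only [Pi.smul_apply, smul_eq_mul, hb1, mul_one, ha] at h1 h2
        rw [if_neg hj] at h2
        rw [h2] at h1
        simp at h1
    · rintro ⟨s, t, hst, hzero, htan⟩
      have hsums : (∑ j, evalK F (pderiv j f) (linePt F a b1 s t) * σK (a j)) = 0 ∧
          (∑ j, evalK F (pderiv j f) (linePt F a b1 s t) * σK (b1 j)) = 0 := by
        rcases htan with h | h
        · exact ⟨Finset.sum_eq_zero fun j _ => by rw [h j, zero_mul],
            Finset.sum_eq_zero fun j _ => by rw [h j, zero_mul]⟩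
        · exact h
      rcases eq_or_ne t 0 with rfl | htne
      · have hsne : s ≠ 0 := by
          rcases hst with h | h
          · exact h
          · exact absurd rfl h
        have hpt : linePt F a b1 s 0 = s • linePt F b1 a 0 1 := by
          funext i'
          simp only [linePt, Pi.smul_apply, smul_eq_mul]
          ring
        have h1 := hsums.2
        rw [hpt] at h1
        have h3 : ∀ j : Fin (k + 1 + 1),
            evalK F (pderiv j f) (s • linePt F b1 a 0 1) * σK (b1 j)
              = s ^ q * (σK (b1 j) * evalK F (pderiv j f) (linePt F b1 a 0 1)) := by
          intro j
          rw [evalK_smul' (pderiv_isHomogeneous hhom j)]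
          ring
        rw [Finset.sum_congr rfl fun j _ => h3 j, ← Finset.mul_sum] at h1
        have h2 : ∑ j, σK (b1 j) * evalK F (pderiv j f) (linePt F b1 a 0 1) = 0 := by
          rcases mul_eq_zero.mp h1 with h | h
          · exact absurd h (pow_ne_zero q hsne)
          · exact h
        rw [keyS b1 a 0, hcba, neg_neg] at h2
        exact hcabne (hσinj (by rw [map_zero]; exact h2))
      · have hts : t * (s * t⁻¹) = s := by
          field_simp
        have hpt : linePt F a b1 s t = t • linePt F a b1 (s * t⁻¹) 1 := by
          funext i'
          simp only [linePt, Pi.smul_apply, smul_eq_mul]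
          rw [mul_add, ← mul_assoc, hts, one_mul]
        have h1 := hsums.1
        rw [hpt] at h1
        have h3 : ∀ j : Fin (k + 1 + 1),
            evalK F (pderiv j f) (t • linePt F a b1 (s * t⁻¹) 1) * σK (a j)
              = t ^ q * (σK (a j) * evalK F (pderiv j f) (linePt F a b1 (s * t⁻¹) 1)) := by
          intro j
          rw [evalK_smul' (pderiv_isHomogeneous hhom j)]
          ring
        rw [Finset.sum_congr rfl fun j _ => h3 j, ← Finset.mul_sum] at h1
        have h2 : ∑ j, σK (a j) * evalK F (pderiv j f) (linePt F a b1 (s * t⁻¹) 1) = 0 := by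
          rcases mul_eq_zero.mp h1 with h | h
          · exact absurd h (pow_ne_zero q htne)
          · exact h
        rw [keyS a b1 (s * t⁻¹), neg_eq_zero] at h2
        exact hcabne (hσinj (by rw [map_zero]; exact h2))
end

section
/- Every smooth space-filling hypersurface of degree q+2 in P^n over F_q is line-transverse-free: every F_q-line is tangent to it. -/
open MvPolynomial

namespace SFHaux

variable {F : Type*} [Field F] {m : ℕ}

noncomputable def lin (a b : Fin m → F) : Fin m → Polynomial F :=
  fun i => Polynomial.C (a i) * Polynomial.X + Polynomial.C (b i)

lemma eval_aeval_lin (g : MvPolynomial (Fin m) F) (a b : Fin m → F) (x : F) :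
    (aeval (lin a b) g).eval x = eval (fun i => x * a i + b i) g := by
  have h := eval₂_comp_left (Polynomial.evalRingHom x) (algebraMap F (Polynomial F)) (lin a b) g
  simp only [Polynomial.coe_evalRingHom] at h
  rw [aeval_def, h]
  have h2 : (Polynomial.evalRingHom x).comp (algebraMap F (Polynomial F)) = RingHom.id F := by
    ext r; simp
  have h3 : (Polynomial.eval x ∘ lin a b) = fun i => x * a i + b i := by
    funext i
    simp [lin]
    ring
  rw [h2, h3, eval₂_id]

lemma derivative_aeval_lin (a b : Fin m → F) (g : MvPolynomial (Fin m) F) :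
    (aeval (lin a b) g).derivative
      = ∑ i, aeval (lin a b) (pderiv i g) * Polynomial.C (a i) := by
  induction g using MvPolynomial.induction_on with
  | C c => simp
  | add p q hp hq => simp [hp, hq, Finset.sum_add_distrib, add_mul]
  | mul_X p j hp =>
    simp only [map_mul, aeval_X, pderiv_mul, map_add, add_mul, Finset.sum_add_distrib,
      Polynomial.derivative_mul, hp]
    congr 1
    · rw [Finset.sum_mul]
      congr 1
      funext i
      ring
    · have hd : (lin a b j).derivative = Polynomial.C (a j) := by
        simp [lin]
      rw [hd]
      have : ∀ i : Fin m, aeval (lin a b) p * aeval (lin a b) (pderiv i (X j : MvPolynomial (Fin m) F)) * Polynomial.C (a i)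
          = if j = i then aeval (lin a b) p * Polynomial.C (a i) else 0 := by
        intro i
        rw [pderiv_X]
        rcases eq_or_ne j i with h | h
        · simp [h, Pi.single_apply]
        · simp [Pi.single_apply, Ne.symm h, h]
      rw [Finset.sum_congr rfl fun i _ => this i]
      simp



lemma sum_univ_eq_of_homogeneous {g : MvPolynomial (Fin m) F} {d : ℕ}
    (hg : g.IsHomogeneous d) {v : Fin m →₀ ℕ} (hv : v ∈ g.support) :
    ∑ i, v i = d := by
  have h := hg (mem_support_iff.mp hv)
  rw [Finsupp.weight_apply] at h
  simp only [Pi.one_apply, smul_eq_mul, mul_one] at h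
  rw [← h, Finsupp.sum]
  exact (Finset.sum_subset (Finset.subset_univ _) (fun i _ hi => by
    simpa using Finsupp.notMem_support_iff.mp hi)).symm

lemma euler {g : MvPolynomial (Fin m) F} {d : ℕ} (hg : g.IsHomogeneous d) :
    ∑ i, (X i : MvPolynomial (Fin m) F) * pderiv i g = C (d : F) * g := by
  conv_lhs => rw [g.as_sum]
  conv_rhs => rw [g.as_sum]
  rw [Finset.mul_sum]
  have : ∀ i : Fin m, (X i : MvPolynomial (Fin m) F) * pderiv i (∑ v ∈ g.support, monomial v (coeff v g))
      = ∑ v ∈ g.support, (X i : MvPolynomial (Fin m) F) * pderiv i (monomial v (coeff v g)) := by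
    intro i; rw [map_sum, Finset.mul_sum]
  rw [Finset.sum_congr rfl fun i _ => this i, Finset.sum_comm]
  refine Finset.sum_congr rfl fun v hv => ?_
  have key : ∀ i : Fin m, (X i : MvPolynomial (Fin m) F) * pderiv i (monomial v (coeff v g))
      = monomial v (coeff v g * ((v i : F))) := by
    intro i
    rw [pderiv_monomial]
    rcases Nat.eq_zero_or_pos (v i) with h0 | hpos
    · simp [h0]
    · have hvv : Finsupp.single i 1 + (v - Finsupp.single i 1) = v := by
        ext j
        rcases eq_or_ne j i with rfl | hne
        · simp [Finsupp.single_apply]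
          omega
        · simp [Finsupp.single_apply, Ne.symm hne]
      rw [X, monomial_mul, one_mul, hvv]
  rw [Finset.sum_congr rfl fun i _ => key i]
  rw [← map_sum, ← Finset.mul_sum, ← Nat.cast_sum, sum_univ_eq_of_homogeneous hg hv]
  rw [C_mul_monomial, mul_comm]

lemma aeval_lin_eq_sum (a b : Fin m → F) (g : MvPolynomial (Fin m) F) :
    aeval (lin a b) g = ∑ v ∈ g.support,
      Polynomial.C (coeff v g) * ∏ i ∈ v.support, (lin a b i) ^ v i := by
  rw [aeval_def, eval₂_eq]
  rfl

lemma natDegree_lin_le (a b : Fin m → F) (i : Fin m) : (lin a b i).natDegree ≤ 1 := by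
  unfold lin; exact Polynomial.natDegree_linear_le

lemma natDegree_lin_pow_le (a b : Fin m → F) (i : Fin m) (k : ℕ) :
    ((lin a b i) ^ k).natDegree ≤ k :=
  (Polynomial.natDegree_pow_le_of_le k (natDegree_lin_le a b i)).trans_eq (mul_one k)

lemma natDegree_prod_lin_le (a b : Fin m → F) (s : Finset (Fin m)) (k : Fin m → ℕ) :
    (∏ i ∈ s, (lin a b i) ^ k i).natDegree ≤ ∑ i ∈ s, k i :=
  le_trans (Polynomial.natDegree_prod_le _ _) <| Finset.sum_le_sum fun i _ =>
    natDegree_lin_pow_le a b i (k i)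

lemma natDegree_aeval_lin_le (a b : Fin m → F) {g : MvPolynomial (Fin m) F} {d : ℕ}
    (hg : g.IsHomogeneous d) : (aeval (lin a b) g).natDegree ≤ d := by
  rw [aeval_lin_eq_sum]
  refine Polynomial.natDegree_sum_le_of_forall_le _ _ fun v hv => ?_
  refine le_trans Polynomial.natDegree_mul_le ?_
  simp only [Polynomial.natDegree_C, zero_add]
  refine le_trans (natDegree_prod_lin_le a b _ _) ?_
  rw [← sum_univ_eq_of_homogeneous hg hv]
  exact Finset.sum_le_sum_of_subset (Finset.subset_univ _)

lemma reflect_one_lin (x y : F) :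
    Polynomial.reflect 1 (Polynomial.C x * Polynomial.X + Polynomial.C y)
      = Polynomial.C y * Polynomial.X + Polynomial.C x := by
  rw [Polynomial.reflect_add, ← pow_one (Polynomial.X (R := F)),
    Polynomial.reflect_C_mul_X_pow, Polynomial.reflect_C]
  simp [add_comm]

lemma reflect_pow_lin (x y : F) (k : ℕ) :
    Polynomial.reflect k ((Polynomial.C x * Polynomial.X + Polynomial.C y) ^ k)
      = (Polynomial.C y * Polynomial.X + Polynomial.C x) ^ k := by
  induction k with
  | zero => simp [Polynomial.reflect_C (1 : F) 0]
  | succ k ih =>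
    have h1 : ((Polynomial.C x * Polynomial.X + Polynomial.C y) ^ k).natDegree ≤ k :=
      (Polynomial.natDegree_pow_le_of_le k Polynomial.natDegree_linear_le).trans_eq (mul_one k)
    rw [pow_succ, Polynomial.reflect_mul _ _ h1 Polynomial.natDegree_linear_le, ih,
      reflect_one_lin, pow_succ]

lemma reflect_prod_lin (a b : Fin m → F) (s : Finset (Fin m)) (k : Fin m → ℕ) :
    Polynomial.reflect (∑ i ∈ s, k i) (∏ i ∈ s, (lin a b i) ^ k i)
      = ∏ i ∈ s, (lin b a i) ^ k i := by
  classical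
  induction s using Finset.induction_on with
  | empty => simp [Polynomial.reflect_C (1 : F) 0]
  | insert _ _ hj ih =>
    rename_i j s
    rw [Finset.sum_insert hj, Finset.prod_insert hj, Finset.prod_insert hj,
      Polynomial.reflect_mul _ _
        (natDegree_lin_pow_le a b j (k j))
        (natDegree_prod_lin_le a b s k),
      ih]
    congr 1
    simpa [lin] using reflect_pow_lin (a j) (b j) (k j)

lemma reflect_sum {ι : Type*} (s : Finset ι) (N : ℕ) (f : ι → Polynomial F) :
    Polynomial.reflect N (∑ i ∈ s, f i) = ∑ i ∈ s, Polynomial.reflect N (f i) := by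
  classical
  induction s using Finset.induction_on with
  | empty => simp [Polynomial.reflect_zero]
  | insert _ _ hj ih =>
    rename_i j s
    rw [Finset.sum_insert hj, Finset.sum_insert hj, Polynomial.reflect_add, ih]

lemma bridge (a b : Fin m → F) {g : MvPolynomial (Fin m) F} {d : ℕ}
    (hg : g.IsHomogeneous d) :
    aeval (lin b a) g = Polynomial.reflect d (aeval (lin a b) g) := by
  rw [aeval_lin_eq_sum, aeval_lin_eq_sum, reflect_sum]
  refine Finset.sum_congr rfl fun v hv => ?_
  rw [Polynomial.reflect_C_mul]
  congr 1
  have hd : d = ∑ i ∈ v.support, v i := by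
    rw [← sum_univ_eq_of_homogeneous hg hv]
    exact (Finset.sum_subset (Finset.subset_univ _) (fun i _ hi => by
      simpa using Finsupp.notMem_support_iff.mp hi)).symm
  rw [hd, reflect_prod_lin]

section FF
variable [Fintype F]

lemma prod_X_sub_C_dvd_of_roots {p : Polynomial F} (h : ∀ c : F, p.eval c = 0) :
    (∏ c : F, (Polynomial.X - Polynomial.C c)) ∣ p := by
  refine Finset.prod_dvd_of_coprime ?_ fun c _ => Polynomial.dvd_iff_isRoot.mpr (h c)
  exact ((Polynomial.pairwise_coprime_X_sub_C (Function.injective_id)).set_pairwise _)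

lemma prod_X_sub_C_eq :
    (∏ c : F, (Polynomial.X - Polynomial.C c))
      = Polynomial.X ^ Fintype.card F - Polynomial.X := by
  have hcard : 1 < Fintype.card F := Fintype.one_lt_card
  have hmonicM : (∏ c : F, (Polynomial.X - Polynomial.C c)).Monic :=
    Polynomial.monic_prod_of_monic _ _ fun c _ => Polynomial.monic_X_sub_C c
  have hmonicT : (Polynomial.X ^ Fintype.card F - Polynomial.X : Polynomial F).Monic := by
    refine Polynomial.monic_X_pow_sub ?_
    rw [Polynomial.degree_X]
    exact_mod_cast hcard
  have hdvd : (∏ c : F, (Polynomial.X - Polynomial.C c))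
      ∣ (Polynomial.X ^ Fintype.card F - Polynomial.X) := by
    refine prod_X_sub_C_dvd_of_roots fun c => ?_
    simp [FiniteField.pow_card]
  obtain ⟨k, hk⟩ := hdvd
  have hdM : (∏ c : F, (Polynomial.X - Polynomial.C c)).natDegree = Fintype.card F := by
    rw [Polynomial.natDegree_prod _ _ fun c _ => (Polynomial.monic_X_sub_C c).ne_zero]
    simp
  have hdT : (Polynomial.X ^ Fintype.card F - Polynomial.X : Polynomial F).natDegree
      = Fintype.card F := by
    rw [Polynomial.natDegree_sub_eq_left_of_natDegree_lt] <;>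
      simp [Polynomial.natDegree_X_pow, Polynomial.natDegree_X, hcard]
  have hk0 : k ≠ 0 := by
    rintro rfl
    rw [mul_zero] at hk
    exact hmonicT.ne_zero hk
  have hkd : k.natDegree = 0 := by
    have := hdT
    rw [hk, Polynomial.natDegree_mul hmonicM.ne_zero hk0, hdM] at this
    omega
  have hkm : k.Monic := by
    have : (Polynomial.X ^ Fintype.card F - Polynomial.X : Polynomial F).leadingCoeff = 1 :=
      hmonicT
    rw [hk, Polynomial.leadingCoeff_mul, hmonicM.leadingCoeff, one_mul] at this
    exact this
  have : k = 1 := (Polynomial.Monic.natDegree_eq_zero hkm).mp hkd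
  rw [hk, this, mul_one]

lemma factor_of_roots {p : Polynomial F} (h : ∀ c : F, p.eval c = 0)
    (hdeg : p.natDegree ≤ Fintype.card F + 1) :
    ∃ R : Polynomial F,
      p = (Polynomial.X ^ Fintype.card F - Polynomial.X) * R ∧ R.natDegree ≤ 1 := by
  obtain ⟨R, hR⟩ := (prod_X_sub_C_eq (F := F)) ▸ prod_X_sub_C_dvd_of_roots h
  refine ⟨R, hR, ?_⟩
  rcases eq_or_ne R 0 with rfl | hR0
  · simp
  rcases eq_or_ne p 0 with rfl | hp0
  · exfalso
    have hM : (Polynomial.X ^ Fintype.card F - Polynomial.X : Polynomial F) ≠ 0 := by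
      refine Polynomial.Monic.ne_zero (Polynomial.monic_X_pow_sub ?_)
      rw [Polynomial.degree_X]
      exact_mod_cast Fintype.one_lt_card
    exact (mul_ne_zero hM hR0) hR.symm
  have := hdeg
  rw [hR, Polynomial.natDegree_mul (fun h0 => hp0 (by rw [hR, h0, zero_mul])) hR0] at this
  have hdT : (Polynomial.X ^ Fintype.card F - Polynomial.X : Polynomial F).natDegree
      = Fintype.card F := by
    rw [Polynomial.natDegree_sub_eq_left_of_natDegree_lt] <;>
      simp [Fintype.one_lt_card]
  rw [hdT] at this
  omega

lemma eval_derivative_of_factor {p R : Polynomial F}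
    (hR : p = (Polynomial.X ^ Fintype.card F - Polynomial.X) * R) (c : F) :
    p.derivative.eval c = -(R.eval c) := by
  have hq : ((Fintype.card F : F)) = 0 := FiniteField.cast_card_eq_zero F
  rw [hR, Polynomial.derivative_mul]
  simp [Polynomial.derivative_X_pow, hq, FiniteField.pow_card]

end FF


lemma evalK_algebraMap (g : MvPolynomial (Fin m) F) (p : Fin m → F) :
    evalK F g (fun i => algebraMap F (AlgebraicClosure F) (p i))
      = algebraMap F (AlgebraicClosure F) (eval p g) := by
  rw [evalK, eval_map]
  have h := eval₂_comp_left (algebraMap F (AlgebraicClosure F)) (RingHom.id F) p g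
  rw [eval₂_id, RingHom.comp_id] at h
  rw [h]
  rfl

lemma tangent_of_goodpt (f : MvPolynomial (Fin m) F) (a b p : Fin m → F)
    (s t : AlgebraicClosure F) (hst : s ≠ 0 ∨ t ≠ 0)
    (hline : ∀ i, s * algebraMap F (AlgebraicClosure F) (a i)
      + t * algebraMap F (AlgebraicClosure F) (b i) = algebraMap F (AlgebraicClosure F) (p i))
    (hp0 : eval p f = 0)
    (hA : ∑ j, eval p (pderiv j f) * a j = 0)
    (hB : ∑ j, eval p (pderiv j f) * b j = 0) : TangentLine F f a b := by
  have hpt : linePt F a b s t = fun i => algebraMap F (AlgebraicClosure F) (p i) :=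
    funext hline
  refine ⟨s, t, hst, ?_, Or.inr ⟨?_, ?_⟩⟩
  · rw [hpt, evalK_algebraMap, hp0, map_zero]
  · rw [hpt]
    have : ∀ j : Fin m, evalK F (pderiv j f) (fun i => algebraMap F (AlgebraicClosure F) (p i))
        * algebraMap F (AlgebraicClosure F) (a j)
        = algebraMap F (AlgebraicClosure F) (eval p (pderiv j f) * a j) := by
      intro j; rw [evalK_algebraMap, map_mul]
    rw [Finset.sum_congr rfl fun j _ => this j, ← map_sum, hA, map_zero]
  · rw [hpt]
    have : ∀ j : Fin m, evalK F (pderiv j f) (fun i => algebraMap F (AlgebraicClosure F) (p i))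
        * algebraMap F (AlgebraicClosure F) (b j)
        = algebraMap F (AlgebraicClosure F) (eval p (pderiv j f) * b j) := by
      intro j; rw [evalK_algebraMap, map_mul]
    rw [Finset.sum_congr rfl fun j _ => this j, ← map_sum, hB, map_zero]

lemma tangent_of_deriv_root (f : MvPolynomial (Fin m) F) {d : ℕ} (hhom : f.IsHomogeneous d)
    (hfill : ∀ v : Fin m → F, eval v f = 0) (a b : Fin m → F)
    (x₀ : F) (hx : (aeval (lin a b) f).derivative.eval x₀ = 0) : TangentLine F f a b := by
  set p : Fin m → F := fun i => x₀ * a i + b i with hp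
  have hA : ∑ j, eval p (pderiv j f) * a j = 0 := by
    have h := congrArg (Polynomial.eval x₀) (derivative_aeval_lin a b f)
    rw [hx] at h
    rw [Polynomial.eval_finset_sum] at h
    simp only [Polynomial.eval_mul, Polynomial.eval_C, eval_aeval_lin] at h
    exact h.symm
  have hEuler : ∑ i, p i * eval p (pderiv i f) = 0 := by
    have h := congrArg (eval p) (euler (F := F) (m := m) hhom)
    rw [map_sum, eval_mul, eval_C, hfill p, mul_zero] at h
    simpa [eval_mul, eval_X] using h
  have hB : ∑ j, eval p (pderiv j f) * b j = 0 := by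
    have hexp : ∀ j : Fin m, eval p (pderiv j f) * b j
        = p j * eval p (pderiv j f) - x₀ * (eval p (pderiv j f) * a j) := by
      intro j
      simp only [hp]
      ring
    rw [Finset.sum_congr rfl fun j _ => hexp j, Finset.sum_sub_distrib, hEuler,
      ← Finset.mul_sum, hA, mul_zero, sub_zero]
  refine tangent_of_goodpt f a b p (algebraMap F (AlgebraicClosure F) x₀) 1
    (Or.inr one_ne_zero) (fun i => ?_) (hfill p) hA hB
  rw [one_mul, ← map_mul, ← map_add]

lemma tangentLine_symm (f : MvPolynomial (Fin m) F) (a b : Fin m → F)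
    (h : TangentLine F f b a) : TangentLine F f a b := by
  obtain ⟨s, t, hst, h0, h1⟩ := h
  have hpt : linePt F a b t s = linePt F b a s t := by
    funext i
    simp only [linePt]
    ring
  refine ⟨t, s, hst.symm, by rw [hpt]; exact h0, ?_⟩
  rcases h1 with h1 | ⟨hb, ha⟩
  · exact Or.inl (by rw [hpt]; exact h1)
  · exact Or.inr ⟨by rw [hpt]; exact ha, by rw [hpt]; exact hb⟩

end SFHaux

/-- Every smooth space-filling hypersurface of degree `q+2` in `ℙⁿ` over `F_q`
is line-transverse-free: every `F_q`-line is tangent to it. -/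
theorem lineTransverseFree_deg_q_add_two (q n : ℕ) (F : Type*) [Field F] [Fintype F]
    (hq : Fintype.card F = q)
    (f : MvPolynomial (Fin (n + 1)) F) (hf0 : f ≠ 0) (hhom : f.IsHomogeneous (q + 2))
    (hfill : SpaceFilling F f) (hsm : SmoothHyp F f) :
    ∀ a b : Fin (n + 1) → F, LinearIndependent F ![a, b] → TangentLine F f a b := by
  classical
  subst hq
  intro a b _hli
  set c2 := Fintype.card F with hc2
  open SFHaux in
  set P : Polynomial F := aeval (lin a b) f with hP
  set Q : Polynomial F := aeval (lin b a) f with hQ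
  have hfill' : ∀ v : Fin (n + 1) → F, eval v f = 0 := hfill
  have hProots : ∀ c : F, P.eval c = 0 := fun c => by
    rw [hP, SFHaux.eval_aeval_lin]; exact hfill' _
  have hQroots : ∀ c : F, Q.eval c = 0 := fun c => by
    rw [hQ, SFHaux.eval_aeval_lin]; exact hfill' _
  have hPdeg : P.natDegree ≤ c2 + 2 := SFHaux.natDegree_aeval_lin_le a b hhom
  have hQdeg : Q.natDegree ≤ c2 + 2 := SFHaux.natDegree_aeval_lin_le b a hhom
  have hQP : Q = Polynomial.reflect (c2 + 2) P := SFHaux.bridge a b hhom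
  have hPQ : P = Polynomial.reflect (c2 + 2) Q := SFHaux.bridge b a hhom
  -- top coefficients vanish
  have hPtop : P.coeff (c2 + 2) = 0 := by
    rw [hPQ, Polynomial.coeff_reflect, Polynomial.revAt_le (le_refl _), Nat.sub_self,
      Polynomial.coeff_zero_eq_eval_zero, hQroots]
  have hQtop : Q.coeff (c2 + 2) = 0 := by
    rw [hQP, Polynomial.coeff_reflect, Polynomial.revAt_le (le_refl _), Nat.sub_self,
      Polynomial.coeff_zero_eq_eval_zero, hProots]
  have hPdeg' : P.natDegree ≤ c2 + 1 := by
    rw [Polynomial.natDegree_le_iff_coeff_eq_zero]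
    intro N hN
    rcases eq_or_lt_of_le (Nat.succ_le_of_lt hN) with h | h
    · rw [← h]; exact hPtop
    · exact Polynomial.coeff_eq_zero_of_natDegree_lt (lt_of_le_of_lt hPdeg h)
  have hQdeg' : Q.natDegree ≤ c2 + 1 := by
    rw [Polynomial.natDegree_le_iff_coeff_eq_zero]
    intro N hN
    rcases eq_or_lt_of_le (Nat.succ_le_of_lt hN) with h | h
    · rw [← h]; exact hQtop
    · exact Polynomial.coeff_eq_zero_of_natDegree_lt (lt_of_le_of_lt hQdeg h)
  obtain ⟨R, hR, hRdeg⟩ := SFHaux.factor_of_roots hProots hPdeg'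
  obtain ⟨S, hS, hSdeg⟩ := SFHaux.factor_of_roots hQroots hQdeg'
  by_cases hRroot : ∃ c : F, R.eval c = 0
  · obtain ⟨c, hc⟩ := hRroot
    refine SFHaux.tangent_of_deriv_root f hhom hfill' a b c ?_
    rw [← hP, SFHaux.eval_derivative_of_factor hR, hc, neg_zero]
  by_cases hSroot : ∃ c : F, S.eval c = 0
  · obtain ⟨c, hc⟩ := hSroot
    refine SFHaux.tangentLine_symm f a b ?_
    refine SFHaux.tangent_of_deriv_root f hhom hfill' b a c ?_
    rw [← hQ, SFHaux.eval_derivative_of_factor hS, hc, neg_zero]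
  exfalso
  push_neg at hRroot hSroot
  -- R and S are nonzero constants
  have hR1 : R.coeff 1 = 0 := by
    by_contra h1
    exact hRroot (-(R.coeff 0) / R.coeff 1) (by
      conv_lhs => rw [Polynomial.eq_X_add_C_of_natDegree_le_one hRdeg]
      simp only [Polynomial.eval_add, Polynomial.eval_mul, Polynomial.eval_C, Polynomial.eval_X]
      rw [← Polynomial.eq_X_add_C_of_natDegree_le_one hRdeg]
      field_simp
      ring)
  have hS1 : S.coeff 1 = 0 := by
    by_contra h1
    exact hSroot (-(S.coeff 0) / S.coeff 1) (by
      conv_lhs => rw [Polynomial.eq_X_add_C_of_natDegree_le_one hSdeg]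
      simp only [Polynomial.eval_add, Polynomial.eval_mul, Polynomial.eval_C, Polynomial.eval_X]
      rw [← Polynomial.eq_X_add_C_of_natDegree_le_one hSdeg]
      field_simp
      ring)
  have hRc : R = Polynomial.C (R.coeff 0) := by
    rw [Polynomial.eq_X_add_C_of_natDegree_le_one hRdeg, hR1]
    simp
  have hSc : S = Polynomial.C (S.coeff 0) := by
    rw [Polynomial.eq_X_add_C_of_natDegree_le_one hSdeg, hS1]
    simp
  have hS0 : S.coeff 0 ≠ 0 := by
    intro h0
    exact hSroot 0 (by rw [hSc, h0, map_zero, Polynomial.eval_zero])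
  have hcard : 1 < c2 := Fintype.one_lt_card
  -- compute Q.coeff 1 two ways
  have hM1 : (Polynomial.X ^ c2 - Polynomial.X : Polynomial F).coeff 1 = -1 := by
    rw [Polynomial.coeff_sub, Polynomial.coeff_X_pow, Polynomial.coeff_X_one]
    rw [if_neg (by omega)]
    ring
  have hMq1 : (Polynomial.X ^ c2 - Polynomial.X : Polynomial F).coeff (c2 + 1) = 0 := by
    rw [Polynomial.coeff_sub, Polynomial.coeff_X_pow, Polynomial.coeff_X]
    rw [if_neg (by omega), if_neg (by omega)]
    ring
  have h1 : Q.coeff 1 = -(S.coeff 0) := by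
    rw [hS, hSc, Polynomial.coeff_mul_C, hM1]
    simp
  have h2 : Q.coeff 1 = 0 := by
    rw [hQP, Polynomial.coeff_reflect, Polynomial.revAt_le (by omega),
      show c2 + 2 - 1 = c2 + 1 from rfl, hR, hRc, Polynomial.coeff_mul_C, hMq1, zero_mul]
  rw [h2] at h1
  exact hS0 (neg_eq_zero.mp h1.symm)
end

section
/- Let q be an odd prime power and let P, Q be homogeneous quadratic polynomials in two variables over F_q. Then the map from P^1(F_q) to P^1(F_q) given by (x:y) ↦ (P(x,y):Q(x,y)) (assumed well-defined, i.e. P and Q have no common zero over F_q) is not a bijection. -/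
open MvPolynomial

lemma quadDecomp {F : Type*} [CommRing F] {R : MvPolynomial (Fin 2) F}
    (hR : R.IsHomogeneous 2) :
    ∃ β : F, ∀ v : Fin 2 → F,
      eval v R = eval ![1,0] R * v 0 ^ 2 + β * (v 0 * v 1) + eval ![0,1] R * v 1 ^ 2 := by
  classical
  set m0 : Fin 2 →₀ ℕ := Finsupp.single 0 2 with hm0
  set m1 : Fin 2 →₀ ℕ := Finsupp.single 0 1 + Finsupp.single 1 1 with hm1
  set m2 : Fin 2 →₀ ℕ := Finsupp.single 1 2 with hm2
  have hdeg : ∀ d : Fin 2 →₀ ℕ, d.degree = d 0 + d 1 := by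
    intro d
    rw [Finsupp.degree_apply, Finset.sum_subset (Finset.subset_univ d.support)]
    · exact Fin.sum_univ_two d
    · intro x _ hx
      simpa using (Finsupp.notMem_support_iff.mp hx)
  have hclass : ∀ d : Fin 2 →₀ ℕ, d.degree = 2 → d = m0 ∨ d = m1 ∨ d = m2 := by
    intro d hd
    rw [hdeg] at hd
    have hb : d 0 ≤ 2 := by omega
    have hde : d = Finsupp.single 0 (d 0) + Finsupp.single 1 (d 1) := by
      ext i; fin_cases i <;> simp [Finsupp.single_apply]
    rcases (show d 0 = 0 ∧ d 1 = 2 ∨ d 0 = 1 ∧ d 1 = 1 ∨ d 0 = 2 ∧ d 1 = 0 by omega) with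
      ⟨h0, h1⟩ | ⟨h0, h1⟩ | ⟨h0, h1⟩ <;> rw [hde, h0, h1] <;> simp [hm0, hm1, hm2]
  have key : ∀ v : Fin 2 → F,
      eval v R = coeff m0 R * v 0 ^ 2 + coeff m1 R * (v 0 * v 1) + coeff m2 R * v 1 ^ 2 := by
    intro v
    rw [eval_eq']
    have hsub : R.support ⊆ ({m0, m1, m2} : Finset (Fin 2 →₀ ℕ)) := by
      intro d hd
      have := hclass d (by rw [Finsupp.degree_eq_weight_one]; exact hR (mem_support_iff.mp hd))
      simp only [Finset.mem_insert, Finset.mem_singleton]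
      tauto
    rw [Finset.sum_subset hsub]
    · have h01 : m0 ≠ m1 := by
        intro h; have := DFunLike.congr_fun h 1; simp [hm0, hm1, Finsupp.single_apply] at this
      have h02 : m0 ≠ m2 := by
        intro h; have := DFunLike.congr_fun h 1; simp [hm0, hm2, Finsupp.single_apply] at this
      have h12 : m1 ≠ m2 := by
        intro h; have := DFunLike.congr_fun h 0; simp [hm1, hm2, Finsupp.single_apply] at this
      rw [Finset.sum_insert (by simp [h01, h02]), Finset.sum_insert (by simp [h12]),
        Finset.sum_singleton]
      simp [hm0, hm1, hm2, Fin.prod_univ_two, Finsupp.single_apply]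
      ring
    · intro d _ hd
      rw [mem_support_iff, not_not] at hd
      rw [hd, zero_mul]
  refine ⟨coeff m1 R, fun v => ?_⟩
  have h0 := key ![1,0]
  have h1 := key ![0,1]
  simp at h0 h1
  rw [key v, ← h0, ← h1]

lemma propOfDet {F : Type*} [Field F] {a b p s : F} (hab : ¬(a = 0 ∧ b = 0))
    (hps : ¬(p = 0 ∧ s = 0)) (h : b * p = a * s) :
    ∃ c : F, c ≠ 0 ∧ p = c * a ∧ s = c * b := by
  by_cases ha : a = 0
  · have hb : b ≠ 0 := fun hb => hab ⟨ha, hb⟩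
    have hp : p = 0 := by
      have h0 : b * p = 0 := by rw [h, ha, zero_mul]
      exact (mul_eq_zero.mp h0).resolve_left hb
    have hs : s ≠ 0 := fun hs => hps ⟨hp, hs⟩
    exact ⟨s / b, div_ne_zero hs hb, by rw [hp, ha, mul_zero], by field_simp⟩
  · have hp : p ≠ 0 := by
      intro hp
      have h0 : a * s = 0 := by rw [← h, hp, mul_zero]
      exact hps ⟨hp, (mul_eq_zero.mp h0).resolve_left ha⟩
    refine ⟨p / a, div_ne_zero hp ha, by field_simp, ?_⟩
    field_simp
    linear_combination -h

/-- For `q` an odd prime power and `P, Q` homogeneous quadratics over `F_q`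
with no common zero on `ℙ¹(F_q)`, the induced map `(x:y) ↦ (P(x,y):Q(x,y))` on `ℙ¹(F_q)`
(described here at the level of nonzero vectors, up to scalars) is not a bijection. -/
theorem quadraticMapNotBijective (q : ℕ) (hq : Odd q) (F : Type*) [Field F] [Fintype F]
    (hcard : Fintype.card F = q)
    (P Q : MvPolynomial (Fin 2) F) (hP : P.IsHomogeneous 2) (hQ : Q.IsHomogeneous 2)
    (hwd : ∀ v : Fin 2 → F, v ≠ 0 → (eval v P ≠ 0 ∨ eval v Q ≠ 0)) :
    ¬ ((∀ v v' : Fin 2 → F, v ≠ 0 → v' ≠ 0 →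
          (∃ c : F, c ≠ 0 ∧ eval v' P = c * eval v P ∧ eval v' Q = c * eval v Q) →
          ∃ c : F, c ≠ 0 ∧ v' = c • v) ∧
        (∀ w : Fin 2 → F, w ≠ 0 → ∃ v : Fin 2 → F, v ≠ 0 ∧
          ∃ c : F, c ≠ 0 ∧ eval v P = c * w 0 ∧ eval v Q = c * w 1)) := by
  rintro ⟨hinj, hsurj⟩
  have h2 : (2 : F) ≠ 0 := by
    apply Ring.two_ne_zero
    intro hchar
    have he := FiniteField.even_card_of_char_two hchar
    rw [hcard] at he
    have := Nat.odd_iff.mp hq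
    omega
  have he0 : (![1,0] : Fin 2 → F) ≠ 0 := by
    intro h; have := congrFun h 0; simp at this
  have he1 : (![0,1] : Fin 2 → F) ≠ 0 := by
    intro h; have := congrFun h 1; simp at this
  have hwd' : ∀ v : Fin 2 → F, v ≠ 0 → ¬(eval v P = 0 ∧ eval v Q = 0) := by
    intro v hv ⟨hp, hq'⟩
    rcases hwd v hv with h | h <;> [exact h hp; exact h hq']
  set a : F := eval ![1,0] P with hav
  set b : F := eval ![1,0] Q with hbv
  set a' : F := eval ![0,1] P with hav'
  set b' : F := eval ![0,1] Q with hbv'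
  have hwd0 : ¬(a = 0 ∧ b = 0) := hwd' ![1,0] he0
  have hwd1 : ¬(a' = 0 ∧ b' = 0) := hwd' ![0,1] he1
  -- the two key quadratic identities
  have hH0 : (C b * P - C a * Q).IsHomogeneous 2 := (hP.C_mul b).sub (hQ.C_mul a)
  have hH1 : (C b' * P - C a' * Q).IsHomogeneous 2 := (hP.C_mul b').sub (hQ.C_mul a')
  obtain ⟨m0, hK0⟩ := quadDecomp hH0
  obtain ⟨m1, hK1⟩ := quadDecomp hH1
  have hK0' : ∀ v : Fin 2 → F, b * eval v P - a * eval v Q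
      = (b * a - a * b) * v 0 ^ 2 + m0 * (v 0 * v 1) + (b * a' - a * b') * v 1 ^ 2 := by
    intro v
    have h := hK0 v
    simp only [map_sub, map_mul, eval_C] at h
    rw [← hav, ← hbv, ← hav', ← hbv'] at h
    exact h
  have hK1' : ∀ v : Fin 2 → F, b' * eval v P - a' * eval v Q
      = (b' * a - a' * b) * v 0 ^ 2 + m1 * (v 0 * v 1) + (b' * a' - a' * b') * v 1 ^ 2 := by
    intro v
    have h := hK1 v
    simp only [map_sub, map_mul, eval_C] at h
    rw [← hav, ← hbv, ← hav', ← hbv'] at h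
    exact h
  -- Step A : the determinant is nonzero
  have hg0 : b * a' - a * b' ≠ 0 := by
    intro h
    obtain ⟨c, hc, h1, h2'⟩ := propOfDet hwd0 hwd1 (by linear_combination h)
    obtain ⟨c2, hc2, hee⟩ := hinj ![1,0] ![0,1] he0 he1
      ⟨c, hc, by rw [← hav', ← hav]; exact h1, by rw [← hbv', ← hbv]; exact h2'⟩
    have := congrFun hee 0
    simp at this
    exact hc2 this.symm
  -- Step B : cross terms vanish
  have hm0 : m0 = 0 := by
    by_contra hm
    set w : Fin 2 → F := ![b * a' - a * b', -m0] with hw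
    have hwne : w ≠ 0 := by
      intro h; exact hg0 (by simpa [hw] using congrFun h 0)
    have hz : b * eval w P = a * eval w Q := by
      have h := hK0' w
      simp only [hw, Matrix.cons_val_zero, Matrix.cons_val_one, Matrix.head_cons] at h
      linear_combination h
    obtain ⟨c, hc, hp, hq'⟩ := propOfDet hwd0 (hwd' w hwne) hz
    obtain ⟨c2, hc2, hwe⟩ := hinj ![1,0] w he0 hwne
      ⟨c, hc, by rw [← hav]; exact hp, by rw [← hbv]; exact hq'⟩
    have := congrFun hwe 1
    simp [hw] at this
    exact hm this
  have hm1 : m1 = 0 := by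
    by_contra hm
    set w : Fin 2 → F := ![-m1, b' * a - a' * b] with hw
    have hg1 : b' * a - a' * b ≠ 0 := by intro h; apply hg0; linear_combination -h
    have hwne : w ≠ 0 := by
      intro h; exact hg1 (by simpa [hw] using congrFun h 1)
    have hz : b' * eval w P = a' * eval w Q := by
      have h := hK1' w
      simp only [hw, Matrix.cons_val_zero, Matrix.cons_val_one, Matrix.head_cons] at h
      linear_combination h
    obtain ⟨c, hc, hp, hq'⟩ := propOfDet hwd1 (hwd' w hwne) hz
    obtain ⟨c2, hc2, hwe⟩ := hinj ![0,1] w he1 hwne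
      ⟨c, hc, by rw [← hav']; exact hp, by rw [← hbv']; exact hq'⟩
    have := congrFun hwe 0
    simp [hw] at this
    exact hm this
  -- Step C : the target point is nonzero
  have hw2 : (![a + a', b + b'] : Fin 2 → F) ≠ 0 := by
    intro h
    have h0 : a + a' = 0 := by simpa using congrFun h 0
    have h1 : b + b' = 0 := by simpa using congrFun h 1
    obtain ⟨c2, hc2, hee⟩ := hinj ![1,0] ![0,1] he0 he1
      ⟨-1, by simp, by rw [← hav', ← hav]; linear_combination h0, by rw [← hbv', ← hbv]; linear_combination h1⟩
    have := congrFun hee 0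
    simp at this
    exact hc2 this.symm
  -- Step D : surjectivity gives a fiber with two points
  obtain ⟨v, hv, c, hc, hvp, hvq⟩ := hsurj ![a + a', b + b'] hw2
  simp only [Matrix.cons_val_zero, Matrix.cons_val_one, Matrix.head_cons] at hvp hvq
  have hE0 : (b * a' - a * b') * (v 1 ^ 2 - c) = 0 := by
    have h := hK0' v
    rw [hvp, hvq, hm0] at h
    linear_combination -h
  have hE1 : (b * a' - a * b') * (v 0 ^ 2 - c) = 0 := by
    have h := hK1' v
    rw [hvp, hvq, hm1] at h
    linear_combination h
  have hv1sq : v 1 ^ 2 = c := by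
    have := (mul_eq_zero.mp hE0).resolve_left hg0
    linear_combination this
  have hv0sq : v 0 ^ 2 = c := by
    have := (mul_eq_zero.mp hE1).resolve_left hg0
    linear_combination this
  have hv0 : v 0 ≠ 0 := by
    intro h; apply hc; rw [← hv0sq, h]; ring
  have hv1 : v 1 ≠ 0 := by
    intro h; apply hc; rw [← hv1sq, h]; ring
  set v' : Fin 2 → F := ![v 0, -(v 1)] with hv'
  have hv'ne : v' ≠ 0 := by
    intro h; exact hv0 (by simpa [hv'] using congrFun h 0)
  -- v' has the same image as v
  have hKv'0 := hK0' v'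
  have hKv'1 := hK1' v'
  simp only [hv', Matrix.cons_val_zero, Matrix.cons_val_one, Matrix.head_cons, hm0, hm1]
    at hKv'0 hKv'1
  have hKv0 := hK0' v
  have hKv1 := hK1' v
  rw [hm0] at hKv0
  rw [hm1] at hKv1
  have heq1 : b * eval v' P - a * eval v' Q = b * eval v P - a * eval v Q := by
    rw [hKv'0, hKv0]; ring
  have heq2 : b' * eval v' P - a' * eval v' Q = b' * eval v P - a' * eval v Q := by
    rw [hKv'1, hKv1]; ring
  have hpp : eval v' P = eval v P := by
    have h := mul_eq_zero.mp (show (b * a' - a * b') * (eval v' P - eval v P) = 0 by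
      linear_combination a' * heq1 - a * heq2)
    have := h.resolve_left hg0
    linear_combination this
  have hqq : eval v' Q = eval v Q := by
    have h := mul_eq_zero.mp (show (b * a' - a * b') * (eval v' Q - eval v Q) = 0 by
      linear_combination b' * heq1 - b * heq2)
    have := h.resolve_left hg0
    linear_combination this
  obtain ⟨c2, hc2, hve⟩ := hinj v v' hv hv'ne
    ⟨1, one_ne_zero, by rw [one_mul]; exact hpp, by rw [one_mul]; exact hqq⟩
  have h0' : v 0 = c2 * v 0 := by simpa [hv'] using congrFun hve 0
  have h1' : -(v 1) = c2 * v 1 := by simpa [hv'] using congrFun hve 1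
  have hc21 : c2 = 1 := by
    have h3 : (c2 - 1) * v 0 = 0 := by linear_combination -h0'
    have := (mul_eq_zero.mp h3).resolve_right hv0
    linear_combination this
  rw [hc21, one_mul] at h1'
  apply hv1
  have h2v : 2 * v 1 = 0 := by linear_combination -h1'
  have := mul_eq_zero.mp h2v
  exact this.resolve_left h2
end

section
/- Let H be a finite hyperbolic plane of even order q (q(q-1)/2 points, q^2−1 lines, q/2 points per line, q+1 lines per point). Then there exists a blocking set X (a set of points meeting every line) of size at most the ceiling of q(q-1)/2 − (C(q(q-1)/2, q/2)·(q/2)!/(q^2−1))^{2/q}. -/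
open Finset

private lemma exists_blocking_aux {Pt L : Type*} [Fintype Pt] [Fintype L]
    (I : Pt → L → Prop) (k n : ℕ) (hn : n ≤ Fintype.card Pt)
    (hline : ∀ l : L, Nat.card {p : Pt // I p l} = k)
    (hlt : Fintype.card L * (Fintype.card Pt - k).choose n < (Fintype.card Pt).choose n) :
    ∃ X : Finset Pt, X.card = n ∧ ∀ l : L, ∃ p ∈ X, I p l := by
  classical
  have hlinef : ∀ l : L, (Finset.univ.filter (fun p => I p l)).card = k := by
    intro l
    have hl := hline l
    rwa [Nat.card_eq_fintype_card, Fintype.card_subtype] at hl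
  set S := Finset.powersetCard n (Finset.univ : Finset Pt) with hS
  have hScard : S.card = (Fintype.card Pt).choose n := by
    simp [hS, Finset.card_powersetCard]
  by_contra hcon
  push_neg at hcon
  have hmiss : ∀ X ∈ S, 1 ≤ (Finset.univ.filter (fun l : L => ∀ p ∈ X, ¬ I p l)).card := by
    intro X hX
    rw [Finset.mem_powersetCard] at hX
    obtain ⟨l, hl⟩ := hcon X hX.2
    have hlmem : l ∈ (Finset.univ.filter (fun l : L => ∀ p ∈ X, ¬ I p l)) := by
      simp only [Finset.mem_filter, Finset.mem_univ, true_and]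
      exact hl
    exact Finset.card_pos.2 ⟨l, hlmem⟩
  have hsum : ∑ X ∈ S, (Finset.univ.filter (fun l : L => ∀ p ∈ X, ¬ I p l)).card
      = Fintype.card L * (Fintype.card Pt - k).choose n := by
    have h1 : ∀ X ∈ S, (Finset.univ.filter (fun l : L => ∀ p ∈ X, ¬ I p l)).card
        = ∑ l : L, if (∀ p ∈ X, ¬ I p l) then 1 else 0 := by
      intro X _; rw [Finset.card_filter]
    rw [Finset.sum_congr rfl h1, Finset.sum_comm]
    have h2 : ∀ l : L, (∑ X ∈ S, if (∀ p ∈ X, ¬ I p l) then 1 else 0)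
        = (Fintype.card Pt - k).choose n := by
      intro l
      rw [← Finset.card_filter]
      have h3 : S.filter (fun X => ∀ p ∈ X, ¬ I p l)
          = Finset.powersetCard n (Finset.univ.filter (fun p => ¬ I p l)) := by
        ext X
        simp only [hS, Finset.mem_filter, Finset.mem_powersetCard]
        constructor
        · rintro ⟨⟨-, hc⟩, hm⟩
          refine ⟨fun p hp => ?_, hc⟩
          simp only [Finset.mem_filter, Finset.mem_univ, true_and]
          exact hm p hp
        · rintro ⟨hsub, hc⟩
          refine ⟨⟨Finset.subset_univ X, hc⟩, fun p hp => ?_⟩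
          have := hsub hp
          simp only [Finset.mem_filter, Finset.mem_univ, true_and] at this
          exact this
      rw [h3, Finset.card_powersetCard]
      congr 1
      have h4 := Finset.card_filter_add_card_filter_not
        (s := (Finset.univ : Finset Pt)) (p := fun p => I p l)
      rw [hlinef l, Finset.card_univ] at h4
      omega
    rw [Finset.sum_congr rfl fun l _ => h2 l]
    simp [Finset.card_univ, mul_comm]
  have hge : S.card ≤ ∑ X ∈ S, (Finset.univ.filter (fun l : L => ∀ p ∈ X, ¬ I p l)).card := by
    calc S.card = ∑ _X ∈ S, 1 := by simp
    _ ≤ _ := Finset.sum_le_sum hmiss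
  rw [hsum, hScard] at hge
  omega

/-- A finite hyperbolic plane of even order `q` (with `q(q-1)/2` points,
`q²−1` lines, `q/2` points per line and `q+1` lines per point) has a blocking set of size
at most `⌈q(q-1)/2 − (C(q(q-1)/2, q/2)·(q/2)!/(q²−1))^{2/q}⌉`. -/
theorem hyperbolicBlockingSet (q : ℕ) (hq4 : 4 ≤ q) (hqe : Even q)
    (Pt L : Type*) [Fintype Pt] [Fintype L] (I : Pt → L → Prop)
    (hP : Fintype.card Pt = q * (q - 1) / 2)
    (hL : Fintype.card L = q ^ 2 - 1)
    (hline : ∀ l : L, Nat.card {p : Pt // I p l} = q / 2)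
    (hpoint : ∀ p : Pt, Nat.card {l : L // I p l} = q + 1) :
    ∃ X : Finset Pt, (∀ l : L, ∃ p ∈ X, I p l) ∧
      (X.card : ℤ) ≤
        ⌈((q * (q - 1) / 2 : ℕ) : ℝ) -
          ((((q * (q - 1) / 2).choose (q / 2) : ℝ) * (Nat.factorial (q / 2) : ℝ) /
              ((q : ℝ) ^ 2 - 1)) ^ ((2 : ℝ) / (q : ℝ)))⌉ := by
  classical
  set N := q * (q - 1) / 2 with hN
  set k := q / 2 with hk
  obtain ⟨c, hc⟩ := hqe
  have hq2k : q = 2 * k := by omega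
  have hk2 : 2 ≤ k := by omega
  have hNeq : N = k * (2 * k - 1) := by
    rw [hN, hq2k, mul_assoc]
    exact Nat.mul_div_cancel_left _ (by norm_num)
  have hkN : k ≤ N := by
    calc k = k * 1 := (mul_one k).symm
    _ ≤ k * (2 * k - 1) := Nat.mul_le_mul_left k (by omega)
    _ = N := hNeq.symm
  have hq2R : (1:ℝ) ≤ (q:ℝ)^2 - 1 := by
    have : (4:ℝ) ≤ (q:ℝ) := by exact_mod_cast hq4
    nlinarith
  have hLcR : (0:ℝ) < (q:ℝ)^2 - 1 := by linarith
  set B : ℝ := ((N.choose k : ℝ) * (Nat.factorial k : ℝ)) / ((q:ℝ)^2 - 1) with hB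
  have hchoosepos : 0 < N.choose k := Nat.choose_pos hkN
  have hB0 : 0 < B := by
    apply div_pos _ hLcR
    have h1 : (0:ℝ) < (N.choose k : ℝ) := by exact_mod_cast hchoosepos
    have h2 : (0:ℝ) < (Nat.factorial k : ℝ) := by exact_mod_cast Nat.factorial_pos k
    exact mul_pos h1 h2
  set t : ℝ := B ^ ((2:ℝ) / (q:ℝ)) with ht
  have ht0 : 0 < t := Real.rpow_pos_of_pos hB0 _
  set m : ℕ := (⌊t⌋).toNat with hm
  have hfloor0 : 0 ≤ ⌊t⌋ := Int.floor_nonneg.2 ht0.le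
  have hfloorm : (m : ℝ) = ((⌊t⌋ : ℤ) : ℝ) := by
    rw [hm]
    exact_mod_cast congrArg (fun z : ℤ => (z : ℝ)) (Int.toNat_of_nonneg hfloor0)
  have hmt : (m : ℝ) ≤ t := by
    rw [hfloorm]; exact Int.floor_le t
  have htk : t ^ k = B := by
    rw [ht, ← Real.rpow_natCast (B ^ ((2:ℝ)/(q:ℝ))) k, ← Real.rpow_mul hB0.le]
    have hexp : (2:ℝ) / (q:ℝ) * (k:ℝ) = 1 := by
      have hqk : (q:ℝ) = 2 * (k:ℝ) := by exact_mod_cast hq2k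
      have hk0 : (k:ℝ) ≠ 0 := by
        have : 0 < k := by omega
        exact_mod_cast this.ne'
      rw [hqk]
      field_simp
    rw [hexp, Real.rpow_one]
  have hmkB : (m:ℝ) ^ k ≤ B := by
    calc (m:ℝ) ^ k ≤ t ^ k := pow_le_pow_left₀ (by positivity) hmt k
    _ = B := htk
  have key : (q ^ 2 - 1) * m.choose k < N.choose k := by
    have hfac : 0 < Nat.factorial k := Nat.factorial_pos k
    rcases Nat.eq_zero_or_pos m with hm0 | hm1
    · rw [hm0, Nat.choose_eq_zero_of_lt (by omega : 0 < k)]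
      simpa using hchoosepos
    · have hdesc : m.descFactorial k < m ^ k := Nat.descFactorial_lt_pow hm1.ne' hk2
      have hR : ((q^2-1 : ℕ) : ℝ) = (q:ℝ)^2 - 1 := by
        have h1q : 1 ≤ q^2 := by
          have := Nat.pow_le_pow_left hq4 2
          omega
        push_cast [h1q]
        ring
      have h1 : ((q^2-1:ℕ):ℝ) * (m.descFactorial k : ℝ) < ((q:ℝ)^2-1) * (m:ℝ)^k := by
        rw [hR]
        have hc2 : (m.descFactorial k : ℝ) < (m:ℝ)^k := by exact_mod_cast hdesc
        exact mul_lt_mul_of_pos_left hc2 hLcR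
      have h2 : ((q:ℝ)^2-1) * (m:ℝ)^k ≤ (N.choose k : ℝ) * (Nat.factorial k : ℝ) := by
        have h2a := mul_le_mul_of_nonneg_left hmkB hLcR.le
        rwa [hB, mul_div_cancel₀] at h2a
        exact ne_of_gt hLcR
      have h4 : (q^2-1) * m.descFactorial k < N.choose k * Nat.factorial k := by
        have h3 : (((q^2-1) * m.descFactorial k : ℕ) : ℝ)
            < ((N.choose k * Nat.factorial k : ℕ) : ℝ) := by
          push_cast
          calc ((q^2-1:ℕ):ℝ) * (m.descFactorial k : ℝ) < ((q:ℝ)^2-1) * (m:ℝ)^k := h1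
          _ ≤ _ := h2
        exact_mod_cast h3
      rw [Nat.descFactorial_eq_factorial_mul_choose] at h4
      have h5 : (q^2-1) * m.choose k * Nat.factorial k < N.choose k * Nat.factorial k := by
        calc (q^2-1) * m.choose k * Nat.factorial k
            = (q^2-1) * (Nat.factorial k * m.choose k) := by ring
        _ < N.choose k * Nat.factorial k := h4
      exact lt_of_mul_lt_mul_right h5 (Nat.zero_le _)
  have hq2ge : 16 ≤ q^2 := by
    have := Nat.pow_le_pow_left hq4 2
    simpa using this
  have hLc1 : 1 ≤ q^2 - 1 := by omega
  have hmN : m ≤ N := by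
    by_contra hcon
    push_neg at hcon
    have h1 : N.choose k ≤ m.choose k := Nat.choose_le_choose k hcon.le
    have h2 : 0 < m.choose k := Nat.choose_pos (hkN.trans hcon.le)
    nlinarith [key]
  set n := N - m with hn
  have hline' : ∀ l : L, Nat.card {p : Pt // I p l} = k := hline
  have hlt : Fintype.card L * (Fintype.card Pt - k).choose n < (Fintype.card Pt).choose n := by
    rw [hP, hL]
    rcases lt_or_ge m k with hmk | hmk
    · rw [Nat.choose_eq_zero_of_lt (by omega : N - k < n)]
      simpa using Nat.choose_pos (by omega : n ≤ N)
    · have e1 : N.choose n = N.choose m := by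
        rw [hn, Nat.choose_symm hmN]
      have e2 : (N - k).choose n = (N - k).choose (m - k) := by
        have h : n = (N - k) - (m - k) := by omega
        rw [h, Nat.choose_symm (by omega : m - k ≤ N - k)]
      rw [e1, e2]
      have hid := Nat.choose_mul (n := N) (show k ≤ m from hmk)
      have hNm : 0 < N.choose m := Nat.choose_pos hmN
      have h6 : (q^2-1) * (N - k).choose (m - k) * N.choose k < N.choose m * N.choose k := by
        calc (q^2-1) * (N - k).choose (m - k) * N.choose k
            = N.choose m * ((q^2-1) * m.choose k) := by
              rw [mul_assoc, mul_comm ((N-k).choose (m-k)), ← hid]; ring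
        _ < N.choose m * N.choose k := mul_lt_mul_of_pos_left key hNm
      exact lt_of_mul_lt_mul_right h6 (Nat.zero_le _)
  obtain ⟨X, hXcard, hXblock⟩ :=
    exists_blocking_aux I k n (by rw [hP]; omega) hline' hlt
  refine ⟨X, hXblock, ?_⟩
  rw [hXcard, hn]
  have hcast : ((N - m : ℕ) : ℤ) = (N : ℤ) - (m : ℤ) := by
    push_cast [hmN]
    ring
  rw [hcast]
  have hceil : (N : ℤ) - (m : ℤ) - 1 < ⌈((N : ℕ) : ℝ) - t⌉ := by
    apply Int.lt_ceil.2
    push_cast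
    have hlt1 := Int.lt_floor_add_one t
    rw [← hfloorm] at hlt1
    linarith
  omega
end

section
/- If S_f ⊂ P^n is a hypersurface of degree d ≥ 2 defined over F_q that is tangent to every F_q-line (line-transverse-free), then the cone S_F ⊂ P^{n+1} defined by F(x_0,...,x_{n+1}) = f(x_0,...,x_n) is also tangent to every F_q-line of P^{n+1}. -/
open MvPolynomial

lemma aux_constantCoeff_pderiv {F : Type*} [Field F] {m d : ℕ} (f : MvPolynomial (Fin m) F)
    (hhom : f.IsHomogeneous d) (hd : 2 ≤ d) (j : Fin m) :
    constantCoeff (pderiv j f) = 0 := by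
  classical
  have hrepr : pderiv j f
      = ∑ s ∈ f.support, monomial (s - Finsupp.single j 1) (coeff s f * s j) := by
    conv_lhs => rw [f.as_sum]
    rw [map_sum]
    simp [pderiv_monomial]
  rw [constantCoeff_eq, hrepr, coeff_sum]
  refine Finset.sum_eq_zero fun s hs => ?_
  rw [coeff_monomial]
  split_ifs with h
  · exfalso
    have hle : s ≤ Finsupp.single j 1 := tsub_eq_zero_iff_le.mp h
    have hsingle : s = Finsupp.single j (s j) := by
      ext i
      rcases eq_or_ne i j with rfl | hij
      · simp
      · have := hle i
        simp [Finsupp.single_apply, Ne.symm hij] at this ⊢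
        omega
    have hdeg : s.degree ≠ d := by
      have h1 : (Finsupp.single j (s j)).degree = s j := by
        rcases Nat.eq_zero_or_pos (s j) with h0 | h0
        · simp [h0, Finsupp.degree]
        · rw [Finsupp.degree_single]
      have := hle j
      simp [Finsupp.single_apply] at this
      rw [hsingle, h1]
      omega
    exact (MvPolynomial.mem_support_iff.mp hs) (hhom.coeff_eq_zero hdeg)
  · rfl

lemma aux_evalK_rename {F : Type*} [Field F] {n : ℕ} (g : MvPolynomial (Fin (n + 1)) F)
    (v : Fin (n + 1 + 1) → AlgebraicClosure F) :
    evalK F (rename (Fin.castAdd 1) g) v = evalK F g (v ∘ Fin.castAdd 1) := by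
  rw [evalK, evalK, map_rename, eval_rename]

lemma aux_pderiv_last {F : Type*} [Field F] {n : ℕ} (g : MvPolynomial (Fin (n + 1)) F) :
    pderiv (Fin.last (n + 1)) (rename (Fin.castAdd 1) g) = 0 := by
  classical
  apply pderiv_eq_zero_of_notMem_vars
  intro h
  obtain ⟨j, _, hj⟩ := Finset.mem_image.mp (vars_rename _ _ h)
  have : (Fin.castAdd 1 j : Fin (n + 1 + 1)).val = j.val := rfl
  have hlt : j.val < n + 1 := j.isLt
  rw [hj] at this
  simp [Fin.last] at this
  omega

lemma aux_evalK_at_zero {F : Type*} [Field F] {m : ℕ} (g : MvPolynomial (Fin m) F)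
    (h : constantCoeff g = 0) : evalK F g 0 = 0 := by
  have : evalK F g 0 = constantCoeff (map (algebraMap F (AlgebraicClosure F)) g) := by
    rw [evalK, ← eval_zero]
  rw [this, constantCoeff_map, h, map_zero]

/-- If the hypersurface of `f` in `ℙⁿ` over `F_q` (of degree `d ≥ 2`) is
tangent to every `F_q`-line, then the cone `F(x_0,...,x_{n+1}) = f(x_0,...,x_n)` in
`ℙ^{n+1}` is also tangent to every `F_q`-line. -/
theorem coneLineTransverseFree (q n d : ℕ) (hd : 2 ≤ d) (F : Type*) [Field F] [Fintype F]
    (hq : Fintype.card F = q)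
    (f : MvPolynomial (Fin (n + 1)) F) (hf0 : f ≠ 0) (hhom : f.IsHomogeneous d)
    (hltf : ∀ a b : Fin (n + 1) → F, LinearIndependent F ![a, b] → TangentLine F f a b) :
    ∀ a b : Fin (n + 1 + 1) → F, LinearIndependent F ![a, b] →
      TangentLine F (rename (Fin.castAdd 1) f) a b := by
  intro a b hab
  have hinj : Function.Injective (Fin.castAdd (n := n + 1) 1) := Fin.castAdd_injective _ _
  set a' : Fin (n + 1) → F := a ∘ Fin.castAdd 1 with ha'
  set b' : Fin (n + 1) → F := b ∘ Fin.castAdd 1 with hb'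
  by_cases hdep : LinearIndependent F ![a', b']
  · -- the truncated directions are independent: lift the tangency from `f`
    obtain ⟨s, t, hst, heval, hcond⟩ := hltf a' b' hdep
    have hpt : linePt F a b s t ∘ Fin.castAdd 1 = linePt F a' b' s t := rfl
    have hterm : ∀ j : Fin (n + 1),
        evalK F (pderiv (Fin.castAdd 1 j) (rename (Fin.castAdd 1) f)) (linePt F a b s t)
          = evalK F (pderiv j f) (linePt F a' b' s t) := by
      intro j
      rw [pderiv_rename hinj, aux_evalK_rename, hpt]
    have hlastz : evalK F (pderiv (Fin.last (n + 1)) (rename (Fin.castAdd 1) f))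
        (linePt F a b s t) = 0 := by
      rw [aux_pderiv_last]
      simp [evalK]
    refine ⟨s, t, hst, ?_, ?_⟩
    · rw [aux_evalK_rename, hpt]; exact heval
    rcases hcond with h | ⟨h1, h2⟩
    · left
      intro i
      refine Fin.lastCases ?_ (fun j => ?_) i
      · exact hlastz
      · rw [show (Fin.castSucc j) = Fin.castAdd 1 j from rfl, hterm]
        exact h j
    · right
      constructor
      · rw [Fin.sum_univ_castSucc]
        have : ∀ j : Fin (n + 1),
            evalK F (pderiv (Fin.castSucc j) (rename (Fin.castAdd 1) f)) (linePt F a b s t) *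
              algebraMap F (AlgebraicClosure F) (a (Fin.castSucc j))
              = evalK F (pderiv j f) (linePt F a' b' s t) *
                algebraMap F (AlgebraicClosure F) (a' j) := by
          intro j
          rw [show (Fin.castSucc j) = Fin.castAdd 1 j from rfl, hterm]
          rfl
        rw [Finset.sum_congr rfl fun j _ => this j, h1, hlastz, zero_mul, add_zero]
      · rw [Fin.sum_univ_castSucc]
        have : ∀ j : Fin (n + 1),
            evalK F (pderiv (Fin.castSucc j) (rename (Fin.castAdd 1) f)) (linePt F a b s t) *
              algebraMap F (AlgebraicClosure F) (b (Fin.castSucc j))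
              = evalK F (pderiv j f) (linePt F a' b' s t) *
                algebraMap F (AlgebraicClosure F) (b' j) := by
          intro j
          rw [show (Fin.castSucc j) = Fin.castAdd 1 j from rfl, hterm]
          rfl
        rw [Finset.sum_congr rfl fun j _ => this j, h2, hlastz, zero_mul, add_zero]
  · -- the truncated directions are dependent: the line passes through the singular vertex
    rw [LinearIndependent.pair_iff] at hdep
    push_neg at hdep
    obtain ⟨c, e, hce, hne⟩ := hdep
    set s : AlgebraicClosure F := algebraMap F (AlgebraicClosure F) c with hs
    set t : AlgebraicClosure F := algebraMap F (AlgebraicClosure F) e with ht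
    have hinjF := (algebraMap F (AlgebraicClosure F)).injective
    have hst : s ≠ 0 ∨ t ≠ 0 := by
      rcases eq_or_ne c 0 with hc | hc
      · refine Or.inr fun h => hne hc (hinjF ?_)
        rw [map_zero, ← ht]
        exact h
      · refine Or.inl fun h => hc (hinjF ?_)
        rw [map_zero, ← hs]
        exact h
    have hz : linePt F a b s t ∘ Fin.castAdd 1 = 0 := by
      funext j
      have hj : c * a' j + e * b' j = 0 := by
        have := congrFun hce j
        simpa [Pi.add_apply, Pi.smul_apply, smul_eq_mul] using this
      show s * algebraMap F (AlgebraicClosure F) (a' j) +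
        t * algebraMap F (AlgebraicClosure F) (b' j) = 0
      rw [hs, ht, ← map_mul, ← map_mul, ← map_add, hj, map_zero]
    have hconst : constantCoeff f = 0 := by
      apply hhom.coeff_eq_zero
      simp [Finsupp.degree]
      omega
    refine ⟨s, t, hst, ?_, Or.inl ?_⟩
    · rw [aux_evalK_rename, hz]
      exact aux_evalK_at_zero f hconst
    · intro i
      refine Fin.lastCases ?_ (fun j => ?_) i
      · rw [aux_pderiv_last]
        simp [evalK]
      · rw [show (Fin.castSucc j) = Fin.castAdd 1 j from rfl, pderiv_rename hinj,
          aux_evalK_rename, hz]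
        exact aux_evalK_at_zero _ (aux_constantCoeff_pderiv f hhom hd j)
end
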